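/- arXiv:2406.17820 — 8 statements merged into one kernel-verified Lean document; each statement's English description precedes it below -/
import Mathlib

section
/- If G is a simple graph on n ≥ 3 vertices that contains no doubly chorded cycle (i.e., no cycle with at least two chords), then the number of edges of G is at most 2n - 3. -/
open SimpleGraph

namespace SimpleGraph.Walk
variable {V : Type*} {G : SimpleGraph V}

lemma length_take {u v : V} (p : G.Walk u v) (n : ℕ) : (p.take n).length = min n p.length := by
  induction p generalizing n with
  | nil => cases n <;> simp [take]
  | cons h q ih =>
    cases n with
    | zero => simp [take]
    | succ n => simp [take, ih, Nat.succ_min_succ]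

lemma getVert_take {u v : V} (p : G.Walk u v) (n i : ℕ) :
    (p.take n).getVert i = p.getVert (min n i) := by
  induction p generalizing n i with
  | nil => cases n <;> cases i <;> simp [take, getVert_of_length_le]
  | cons h q ih =>
    cases n with
    | zero => cases i <;> simp [take, getVert_of_length_le]
    | succ n =>
      cases i with
      | zero => simp [take]
      | succ i => simp [take, getVert_cons_succ, ih, Nat.succ_min_succ]

lemma support_take_subset {u v : V} (p : G.Walk u v) (n : ℕ) :
    (p.take n).support ⊆ p.support := by
  induction p generalizing n with
  | nil => cases n <;> simp [take]
  | cons h q ih =>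
    cases n with
    | zero => intro x hx; simp [take] at hx; simp [hx]
    | succ n =>
      intro x hx
      rw [support_take] at hx
      exact List.mem_of_mem_take hx

lemma getVert_drop {u v : V} (p : G.Walk u v) (n i : ℕ) :
    (p.drop n).getVert i = p.getVert (n + i) := by
  induction p generalizing n i with
  | nil => cases n <;> simp [Walk.drop, getVert_of_length_le]
  | cons h q ih =>
    cases n with
    | zero => simp [Walk.drop]
    | succ n => simp [Walk.drop, getVert_cons_succ, ih, Nat.succ_add]

lemma length_drop {u v : V} (p : G.Walk u v) (n : ℕ) :
    (p.drop n).length = p.length - n := by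
  induction p generalizing n with
  | nil => cases n <;> simp [Walk.drop]
  | cons h q ih =>
    cases n with
    | zero => simp [Walk.drop]
    | succ n => simp [Walk.drop, ih]

lemma mem_edges_iff' {u v : V} (p : G.Walk u v) (e : Sym2 V) :
    e ∈ p.edges ↔ ∃ m, m < p.length ∧ e = s(p.getVert m, p.getVert (m+1)) := by
  induction p with
  | nil => simp
  | cons h q ih =>
    simp only [edges_cons, List.mem_cons, ih, length_cons]
    constructor
    · rintro (rfl | ⟨m, hm, rfl⟩)
      · exact ⟨0, by simp, by simp [getVert_cons_succ]⟩
      · exact ⟨m+1, by omega, by simp [getVert_cons_succ]⟩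
    · rintro ⟨m, hm, rfl⟩
      cases m with
      | zero => left; simp [getVert_cons_succ]
      | succ m => right; exact ⟨m, by omega, by simp [getVert_cons_succ]⟩

lemma IsPath.getVert_injOn' {u v : V} {p : G.Walk u v} (hp : p.IsPath) :
    ∀ i ≤ p.length, ∀ j ≤ p.length, p.getVert i = p.getVert j → i = j := by
  induction p with
  | nil => intro i hi j hj _; simp at hi hj; omega
  | cons h q ih =>
    rw [cons_isPath_iff] at hp
    intro i hi j hj hij
    match i, j with
    | 0, 0 => rfl
    | 0, (j+1) =>
      rw [getVert_zero, getVert_cons_succ] at hij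
      exact absurd (mem_support_iff_exists_getVert.2 ⟨j, hij.symm, by simpa using hj⟩) hp.2
    | (i+1), 0 =>
      rw [getVert_zero, getVert_cons_succ] at hij
      exact absurd (mem_support_iff_exists_getVert.2 ⟨i, hij, by simpa using hi⟩) hp.2
    | (i+1), (j+1) =>
      rw [getVert_cons_succ, getVert_cons_succ] at hij
      have := ih hp.1 i (by simpa using hi) j (by simpa using hj) hij
      omega

lemma mem_support_take_iff {u v x : V} (p : G.Walk u v) (n : ℕ) (hn : n ≤ p.length) :
    x ∈ (p.take n).support ↔ ∃ m, m ≤ n ∧ p.getVert m = x := by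
  rw [mem_support_iff_exists_getVert]
  constructor
  · rintro ⟨m, hg, hl⟩
    rw [length_take] at hl
    rw [getVert_take, min_eq_right (by omega)] at hg
    exact ⟨m, by omega, hg⟩
  · rintro ⟨m, hm, hg⟩
    refine ⟨m, ?_, by rw [length_take]; omega⟩
    rwa [getVert_take, min_eq_right (by omega)]

lemma mem_support_drop_iff {u v x : V} (p : G.Walk u v) (n : ℕ) (hn : n ≤ p.length) :
    x ∈ (p.drop n).support ↔ ∃ m, n ≤ m ∧ m ≤ p.length ∧ p.getVert m = x := by
  rw [mem_support_iff_exists_getVert]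
  constructor
  · rintro ⟨m, hg, hl⟩
    rw [length_drop] at hl
    rw [getVert_drop] at hg
    exact ⟨n + m, by omega, by omega, hg⟩
  · rintro ⟨m, hm1, hm2, hg⟩
    refine ⟨m - n, ?_, by rw [length_drop]; omega⟩
    rw [getVert_drop, show n + (m - n) = m by omega]
    exact hg

lemma mem_edges_take_iff {u v : V} (p : G.Walk u v) (n : ℕ) (hn : n ≤ p.length) (e : Sym2 V) :
    e ∈ (p.take n).edges ↔ ∃ m, m < n ∧ e = s(p.getVert m, p.getVert (m+1)) := by
  rw [mem_edges_iff']
  constructor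
  · rintro ⟨m, hm, rfl⟩
    rw [length_take] at hm
    refine ⟨m, by omega, ?_⟩
    rw [getVert_take, getVert_take, min_eq_right (by omega : m ≤ n),
      min_eq_right (by omega : m + 1 ≤ n)]
  · rintro ⟨m, hm, rfl⟩
    refine ⟨m, by rw [length_take]; omega, ?_⟩
    rw [getVert_take, getVert_take, min_eq_right (by omega : m ≤ n),
      min_eq_right (by omega : m + 1 ≤ n)]

end SimpleGraph.Walk

/-- A chord of the cycle `c` in `G`: an edge of `G` whose endpoints lie on `c`
but which is not itself an edge of `c`. -/
def IsChord {V : Type*} (G : SimpleGraph V) {v : V} (c : G.Walk v v) (e : Sym2 V) : Prop :=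
  e ∈ G.edgeSet ∧ e ∉ c.edges ∧ ∀ x ∈ e, x ∈ c.support

/-- `G` contains a doubly chorded cycle: a cycle with at least two chords. -/
def HasDCC {V : Type*} (G : SimpleGraph V) : Prop :=
  ∃ (v : V) (c : G.Walk v v), c.IsCycle ∧
    ∃ e₁ e₂ : Sym2 V, e₁ ≠ e₂ ∧ IsChord G c e₁ ∧ IsChord G c e₂

/-- `G` contains a cycle with two chords incident to a common vertex. -/
def HasDCC1 {V : Type*} (G : SimpleGraph V) : Prop :=
  ∃ (v : V) (c : G.Walk v v), c.IsCycle ∧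
    ∃ e₁ e₂ : Sym2 V, e₁ ≠ e₂ ∧ IsChord G c e₁ ∧ IsChord G c e₂ ∧
      ∃ w : V, w ∈ e₁ ∧ w ∈ e₂


section Helper
variable {V : Type*} {G : SimpleGraph V}
open SimpleGraph.Walk

lemma hasDCC_of_chords {u v : V} {p : G.Walk u v} (hp : p.IsPath) {c i1 j1 i2 j2 : ℕ}
    (hcL : c ≤ p.length) (hc : 1 < c) (hadj : G.Adj u (p.getVert c))
    (hij1 : i1 < j1) (hj1 : j1 ≤ c) (hne1 : i1 + 1 ≠ j1) (h01 : ¬(i1 = 0 ∧ j1 = c))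
    (hij2 : i2 < j2) (hj2 : j2 ≤ c) (hne2 : i2 + 1 ≠ j2) (h02 : ¬(i2 = 0 ∧ j2 = c))
    (hpair : i1 ≠ i2 ∨ j1 ≠ j2)
    (ha1 : G.Adj (p.getVert i1) (p.getVert j1))
    (ha2 : G.Adj (p.getVert i2) (p.getVert j2)) : HasDCC G := by
  have hu0 : u = p.getVert 0 := (getVert_zero p).symm
  have hinj := hp.getVert_injOn'
  have htake : (p.take c).IsPath := hp.take c
  have hedge : ∀ e, e ∈ (p.take c).edges ↔
      ∃ m, m < c ∧ e = s(p.getVert m, p.getVert (m+1)) := by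
    intro e
    rw [mem_edges_iff']
    constructor
    · rintro ⟨m, hm, rfl⟩
      rw [length_take] at hm
      refine ⟨m, by omega, ?_⟩
      rw [getVert_take, getVert_take, min_eq_right (by omega : m ≤ c),
        min_eq_right (by omega : m + 1 ≤ c)]
    · rintro ⟨m, hm, rfl⟩
      refine ⟨m, by rw [length_take]; omega, ?_⟩
      rw [getVert_take, getVert_take, min_eq_right (by omega : m ≤ c),
        min_eq_right (by omega : m + 1 ≤ c)]
  have hsupp : ∀ m, m ≤ c → p.getVert m ∈ (p.take c).support := by
    intro m hm
    rw [mem_support_iff_exists_getVert]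
    refine ⟨m, ?_, by rw [length_take]; omega⟩
    rw [getVert_take, min_eq_right hm]
  set C : G.Walk u u := Walk.cons hadj (p.take c).reverse with hCdef
  have hcyc : C.IsCycle := by
    rw [hCdef, Walk.cons_isCycle_iff]
    refine ⟨htake.reverse, ?_⟩
    rw [edges_reverse, List.mem_reverse, hedge]
    rintro ⟨m, hm, heq⟩
    rcases Sym2.eq_iff.mp heq with ⟨h1, h2⟩ | ⟨h1, h2⟩
    · have e1 := hinj 0 (by omega) m (by omega) (hu0.symm.trans h1).symm.symm
      have e2 := hinj c (by omega) (m+1) (by omega) h2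
      omega
    · have e1 := hinj 0 (by omega) (m+1) (by omega) (hu0.symm.trans h1).symm.symm
      omega
  have chord : ∀ i j, i < j → j ≤ c → i + 1 ≠ j → ¬(i = 0 ∧ j = c) →
      G.Adj (p.getVert i) (p.getVert j) → IsChord G C s(p.getVert i, p.getVert j) := by
    intro i j hij hjc hne h0 ha
    refine ⟨ha, ?_, ?_⟩
    · rw [hCdef, edges_cons, List.mem_cons]
      rintro (heq | hmem)
      · rcases Sym2.eq_iff.mp heq with ⟨h1, h2⟩ | ⟨h1, h2⟩
        · have e1 := hinj i (by omega) 0 (by omega) (h1.trans hu0)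
          have e2 := hinj j (by omega) c (by omega) h2
          omega
        · have e2 := hinj j (by omega) 0 (by omega) (h2.trans hu0)
          omega
      · rw [edges_reverse, List.mem_reverse, hedge] at hmem
        obtain ⟨m, hm, heq⟩ := hmem
        rw [Sym2.eq_iff] at heq
        rcases heq with ⟨h1, h2⟩ | ⟨h1, h2⟩
        · have e1 := hinj i (by omega) m (by omega) h1
          have e2 := hinj j (by omega) (m+1) (by omega) h2
          omega
        · have e1 := hinj i (by omega) (m+1) (by omega) h1
          have e2 := hinj j (by omega) m (by omega) h2
          omega
    · intro x hx
      rw [Sym2.mem_iff] at hx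
      have : ∀ m, m ≤ c → p.getVert m ∈ C.support := by
        intro m hm
        rw [hCdef, support_cons, List.mem_cons]
        right
        rw [support_reverse, List.mem_reverse]
        exact hsupp m hm
      rcases hx with rfl | rfl
      · exact this i (by omega)
      · exact this j (by omega)
  refine ⟨u, C, hcyc, s(p.getVert i1, p.getVert j1), s(p.getVert i2, p.getVert j2), ?_,
    chord i1 j1 hij1 hj1 hne1 h01 ha1, chord i2 j2 hij2 hj2 hne2 h02 ha2⟩
  intro heq
  rcases Sym2.eq_iff.mp heq with ⟨h1, h2⟩ | ⟨h1, h2⟩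
  · have e1 := hinj i1 (by omega) i2 (by omega) h1
    have e2 := hinj j1 (by omega) j2 (by omega) h2
    omega
  · have e1 := hinj i1 (by omega) j2 (by omega) h1
    have e2 := hinj j1 (by omega) i2 (by omega) h2
    omega

end Helper

section MinDeg
variable {V : Type*} {G : SimpleGraph V}
open SimpleGraph.Walk

private lemma sort3 {P : ℕ → Prop} {i j k : ℕ} (hij : i ≠ j) (hik : i ≠ k) (hjk : j ≠ k)
    (hi : P i) (hj : P j) (hk : P k) : ∃ a b c, a < b ∧ b < c ∧ P a ∧ P b ∧ P c := by
  rcases lt_or_gt_of_ne hij with h1 | h1 <;> rcases lt_or_gt_of_ne hik with h2 | h2 <;>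
    rcases lt_or_gt_of_ne hjk with h3 | h3
  · exact ⟨i, j, k, h1, h3, hi, hj, hk⟩
  · exact ⟨i, k, j, h2, h3, hi, hk, hj⟩
  · omega
  · exact ⟨k, i, j, h2, h1, hk, hi, hj⟩
  · exact ⟨j, i, k, h1, h2, hj, hi, hk⟩
  · omega
  · exact ⟨j, k, i, h3, h2, hj, hk, hi⟩
  · exact ⟨k, j, i, h3, h1, hk, hj, hi⟩

lemma hasDCC_of_minDegree [Fintype V] [DecidableEq V] [Nonempty V]
    (G : SimpleGraph V) [DecidableRel G.Adj]
    (hdeg : ∀ v : V, 3 ≤ G.degree v) : HasDCC G := by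
  classical
  -- a longest path
  set S : Set ℕ := {l | ∃ (u w : V) (q : G.Walk u w), q.IsPath ∧ q.length = l} with hSdef
  have hS0 : (0 : ℕ) ∈ S := by
    obtain ⟨x⟩ := ‹Nonempty V›
    exact ⟨x, x, Walk.nil, Walk.IsPath.nil, rfl⟩
  have hbdd : BddAbove S := by
    refine ⟨Fintype.card V, ?_⟩
    rintro l ⟨u, w, q, hq, rfl⟩
    exact hq.length_lt.le
  obtain ⟨x0, xk, p, hp, hpl⟩ := Nat.sSup_mem ⟨0, hS0⟩ hbdd
  have hmax : ∀ (u w : V) (q : G.Walk u w), q.IsPath → q.length ≤ p.length := by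
    intro u w q hq
    rw [hpl]
    exact le_csSup hbdd ⟨u, w, q, hq, rfl⟩
  have hinj := hp.getVert_injOn'
  -- maximal paths contain all neighbors of their endpoints
  have ext : ∀ (u w : V) (q : G.Walk u w), q.IsPath → q.length = p.length →
      ∀ z, G.Adj z u → z ∈ q.support := by
    intro u w q hq hql z hz
    by_contra hns
    have := hmax z w (Walk.cons hz q) (hq.cons hns)
    rw [Walk.length_cons] at this
    omega
  -- three neighbours of x0 as path indices
  have hnbr : ∀ z, G.Adj x0 z → ∃ m, m ≤ p.length ∧ 1 ≤ m ∧ p.getVert m = z := by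
    intro z hz
    have hzs := ext x0 xk p hp rfl z hz.symm
    obtain ⟨m, hm1, hm2⟩ := mem_support_iff_exists_getVert.mp hzs
    refine ⟨m, hm2, ?_, hm1⟩
    rcases Nat.eq_zero_or_pos m with rfl | h
    · rw [getVert_zero] at hm1
      exact absurd hm1 hz.ne
    · exact h
  have h3 : 2 < (G.neighborFinset x0).card := by
    have := hdeg x0
    rw [← SimpleGraph.card_neighborFinset_eq_degree] at this
    omega
  obtain ⟨w1, w2, w3, hw1, hw2, hw3, h12, h13, h23⟩ := Finset.two_lt_card_iff.mp h3
  rw [SimpleGraph.mem_neighborFinset] at hw1 hw2 hw3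
  obtain ⟨n1, hn1L, hn11, hn1⟩ := hnbr w1 hw1
  obtain ⟨n2, hn2L, hn21, hn2⟩ := hnbr w2 hw2
  obtain ⟨n3, hn3L, hn31, hn3⟩ := hnbr w3 hw3
  have hd12 : n1 ≠ n2 := fun h => h12 (hn1 ▸ h ▸ hn2)
  have hd13 : n1 ≠ n3 := fun h => h13 (hn1 ▸ h ▸ hn3)
  have hd23 : n2 ≠ n3 := fun h => h23 (hn2 ▸ h ▸ hn3)
  obtain ⟨a, b, c, hab, hbc, ⟨haL, ha1, hA⟩, ⟨hbL, hb1, hB⟩, ⟨hcL, hc1, hC⟩⟩ :=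
    sort3 (P := fun m => m ≤ p.length ∧ 1 ≤ m ∧ G.Adj x0 (p.getVert m)) hd12 hd13 hd23
      ⟨hn1L, hn11, hn1 ▸ hw1⟩ ⟨hn2L, hn21, hn2 ▸ hw2⟩ ⟨hn3L, hn31, hn3 ▸ hw3⟩
  by_cases ha2 : 2 ≤ a
  · -- two chords from x0 into the cycle x0 ... x_c
    apply hasDCC_of_chords hp (c := c) (i1 := 0) (j1 := a) (i2 := 0) (j2 := b) hcL (by omega) hC
      (by omega) (by omega) (by omega) (by omega) (by omega) (by omega) (by omega) (by omega)
      (by omega) (by rw [p.getVert_zero]; exact hA) (by rw [p.getVert_zero]; exact hB)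
  · -- a = 1; rotate the path at x_{b-1}
    have haeq : a = 1 := by omega
    have hb2 : 2 ≤ b := by omega
    set r : ℕ := b - 1 with hrdef
    have hrL : r ≤ p.length := by omega
    -- the rotated path P'
    set P' : G.Walk (p.getVert r) xk := ((p.take r).reverse).append (Walk.cons hB (p.drop b))
      with hP'def
    have hP'path : P'.IsPath := by
      rw [hP'def, Walk.isPath_def, Walk.support_append, Walk.support_reverse,
        Walk.support_cons, List.tail_cons]
      rw [List.nodup_append]
      refine ⟨List.nodup_reverse.mpr (hp.take r).support_nodup,
        (hp.drop b).support_nodup, ?_⟩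
      intro x hx1 y hx2 hxy
      subst hxy
      rw [List.mem_reverse, Walk.mem_support_take_iff p r hrL] at hx1
      rw [Walk.mem_support_drop_iff p b hbL] at hx2
      obtain ⟨m1, hm1, hg1⟩ := hx1
      obtain ⟨m2, hm2, hm2', hg2⟩ := hx2
      have := hinj m1 (by omega) m2 (by omega) (hg1.trans hg2.symm)
      omega
    have hP'len : P'.length = p.length := by
      rw [hP'def, Walk.length_append, Walk.length_reverse, Walk.length_take,
        Walk.length_cons, Walk.length_drop]
      omega
    -- a third neighbour t of x_{b-1}
    have h3' : 2 < (G.neighborFinset (p.getVert r)).card := by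
      have := hdeg (p.getVert r)
      rw [← SimpleGraph.card_neighborFinset_eq_degree] at this
      omega
    have hex : ((G.neighborFinset (p.getVert r)) \
        {p.getVert (b-2), p.getVert b}).Nonempty := by
      rw [← Finset.card_pos]
      have hsd := Finset.le_card_sdiff ({p.getVert (b-2), p.getVert b} : Finset V)
        (G.neighborFinset (p.getVert r))
      have hc2 : ({p.getVert (b-2), p.getVert b} : Finset V).card ≤ 2 :=
        (Finset.card_insert_le _ _).trans (by simp)
      omega
    obtain ⟨t, ht⟩ := hex
    rw [Finset.mem_sdiff, SimpleGraph.mem_neighborFinset] at ht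
    obtain ⟨hyt, htne⟩ := ht
    simp only [Finset.mem_insert, Finset.mem_singleton, not_or] at htne
    obtain ⟨ht2, htb⟩ := htne
    -- t lies on the path, say at index j
    have hts : t ∈ P'.support := ext _ _ P' hP'path hP'len t hyt.symm
    have hjex : ∃ j, j ≤ p.length ∧ p.getVert j = t := by
      rw [hP'def, Walk.support_append, Walk.support_reverse, Walk.support_cons,
        List.tail_cons, List.mem_append, List.mem_reverse] at hts
      rcases hts with h | h
      · rw [Walk.mem_support_take_iff p r hrL] at h
        obtain ⟨m, hm, hg⟩ := h
        exact ⟨m, by omega, hg⟩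
      · rw [Walk.mem_support_drop_iff p b hbL] at h
        obtain ⟨m, hm, hm', hg⟩ := h
        exact ⟨m, hm', hg⟩
    obtain ⟨j, hjL, hgj⟩ := hjex
    have hjb1 : j ≠ b - 1 := by
      intro h
      exact hyt.ne (by rw [hrdef, ← h, hgj])
    have hjb2 : j ≠ b - 2 := fun h => ht2 (h ▸ hgj).symm
    have hjb : j ≠ b := fun h => htb (h ▸ hgj).symm
    by_cases hjc : j ≤ c
    · -- chord from x_{b-1} lands inside the cycle x0 ... x_c
      apply hasDCC_of_chords hp (c := c) (i1 := 0) (j1 := b) (i2 := min r j) (j2 := max r j)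
        hcL (by omega) hC (by omega) (by omega) (by omega) (by omega) (by omega) (by omega)
        (by omega) (by omega) (by omega) (by rw [p.getVert_zero]; exact hB) ?_
      rcases le_or_gt r j with h | h
      · rw [min_eq_left (by omega), max_eq_right (by omega), hgj]
        exact hyt
      · rw [min_eq_right (by omega), max_eq_left (by omega)]
        exact (hgj ▸ hyt).symm
    · -- t lies beyond x_c : build the big cycle through the rotation
      push_neg at hjc
      have hjr : G.Adj (p.getVert j) (p.getVert r) := (hgj ▸ hyt).symm
      have padj : G.Adj (p.getVert r) (p.getVert b) := by
        have := p.adj_getVert_succ (show r < p.length by omega)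
        rwa [show r + 1 = b by omega] at this
      have hx0 : p.getVert 0 = x0 := p.getVert_zero
      -- the middle segment from x_b to x_j
      have hjbL : j - b ≤ (p.drop b).length := by rw [Walk.length_drop]; omega
      set seg : G.Walk (p.getVert b) (p.getVert j) :=
        ((p.drop b).take (j - b)).copy rfl
          (by rw [Walk.getVert_drop, show b + (j - b) = j by omega]) with hsegdef
      have memseg : ∀ x, x ∈ seg.support ↔ ∃ m, b ≤ m ∧ m ≤ j ∧ p.getVert m = x := by
        intro x
        rw [hsegdef, Walk.support_copy, Walk.mem_support_take_iff _ _ hjbL]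
        constructor
        · rintro ⟨m, hm, hg⟩
          rw [Walk.getVert_drop] at hg
          exact ⟨b + m, by omega, by omega, hg⟩
        · rintro ⟨m, hm1, hm2, hg⟩
          refine ⟨m - b, by omega, ?_⟩
          rw [Walk.getVert_drop, show b + (m - b) = m by omega]
          exact hg
      have edgeseg : ∀ e, e ∈ seg.edges ↔
          ∃ m, b ≤ m ∧ m < j ∧ e = s(p.getVert m, p.getVert (m+1)) := by
        intro e
        rw [hsegdef, Walk.edges_copy, Walk.mem_edges_take_iff _ _ hjbL]
        constructor
        · rintro ⟨m, hm, rfl⟩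
          exact ⟨b + m, by omega, by omega, by rw [Walk.getVert_drop, Walk.getVert_drop,
            show b + (m + 1) = b + m + 1 by omega]⟩
        · rintro ⟨m, hm1, hm2, rfl⟩
          refine ⟨m - b, by omega, ?_⟩
          rw [Walk.getVert_drop, Walk.getVert_drop, show b + (m - b) = m by omega,
            show b + (m - b + 1) = m + 1 by omega]
      have hsegpath : seg.IsPath := by
        rw [hsegdef]
        simp only [Walk.isPath_copy]
        exact (hp.drop b).take _
      -- the cycle C₂
      set Q : G.Walk (p.getVert b) x0 := seg.append (Walk.cons hjr ((p.take r).reverse))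
        with hQdef
      have hQsupp : Q.support = seg.support ++ (p.take r).support.reverse := by
        rw [hQdef, Walk.support_append, Walk.support_cons, List.tail_cons,
          Walk.support_reverse]
      have hQedges : Q.edges = seg.edges ++ (s(p.getVert j, p.getVert r) ::
          (p.take r).edges.reverse) := by
        rw [hQdef, Walk.edges_append, Walk.edges_cons, Walk.edges_reverse]
      have hQpath : Q.IsPath := by
        rw [Walk.isPath_def, hQsupp, List.nodup_append]
        refine ⟨hsegpath.support_nodup, List.nodup_reverse.mpr (hp.take r).support_nodup, ?_⟩
        intro x hx1 y hx2 hxy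
        subst hxy
        rw [memseg] at hx1
        rw [List.mem_reverse, Walk.mem_support_take_iff p r hrL] at hx2
        obtain ⟨m1, hm1, hm1', hg1⟩ := hx1
        obtain ⟨m2, hm2, hg2⟩ := hx2
        have := hinj m1 (by omega) m2 (by omega) (hg1.trans hg2.symm)
        omega
      have hQe : ∀ i1 j1 : ℕ, i1 ≤ p.length → j1 ≤ p.length →
          (∀ m, b ≤ m → m < j → ¬(i1 = m ∧ j1 = m + 1) ∧ ¬(i1 = m + 1 ∧ j1 = m)) →
          ¬(i1 = j ∧ j1 = r) → ¬(i1 = r ∧ j1 = j) →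
          (∀ m, m < r → ¬(i1 = m ∧ j1 = m + 1) ∧ ¬(i1 = m + 1 ∧ j1 = m)) →
          s(p.getVert i1, p.getVert j1) ∉ Q.edges := by
        intro i1 j1 hi1 hj1 hseg hjr1 hjr2 htk hmem
        rw [hQedges, List.mem_append, List.mem_cons, List.mem_reverse] at hmem
        rcases hmem with hmem | hmem | hmem
        · rw [edgeseg] at hmem
          obtain ⟨m, hm1, hm2, heq⟩ := hmem
          rcases Sym2.eq_iff.mp heq with ⟨e1, e2⟩ | ⟨e1, e2⟩
          · exact (hseg m hm1 hm2).1 ⟨hinj _ hi1 _ (by omega) e1, hinj _ hj1 _ (by omega) e2⟩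
          · exact (hseg m hm1 hm2).2 ⟨hinj _ hi1 _ (by omega) e1, hinj _ hj1 _ (by omega) e2⟩
        · rcases Sym2.eq_iff.mp hmem with ⟨e1, e2⟩ | ⟨e1, e2⟩
          · exact hjr1 ⟨hinj _ hi1 _ (by omega) e1, hinj _ hj1 _ (by omega) e2⟩
          · exact hjr2 ⟨hinj _ hi1 _ (by omega) e1, hinj _ hj1 _ (by omega) e2⟩
        · rw [Walk.mem_edges_take_iff p r hrL] at hmem
          obtain ⟨m, hm, heq⟩ := hmem
          rcases Sym2.eq_iff.mp heq with ⟨e1, e2⟩ | ⟨e1, e2⟩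
          · exact (htk m hm).1 ⟨hinj _ hi1 _ (by omega) e1, hinj _ hj1 _ (by omega) e2⟩
          · exact (htk m hm).2 ⟨hinj _ hi1 _ (by omega) e1, hinj _ hj1 _ (by omega) e2⟩
      set C₂ : G.Walk x0 x0 := Walk.cons hB Q with hC2def
      have hcyc2 : C₂.IsCycle := by
        rw [hC2def, Walk.cons_isCycle_iff]
        refine ⟨hQpath, ?_⟩
        have : s(x0, p.getVert b) = s(p.getVert 0, p.getVert b) := by rw [hx0]
        rw [this]
        exact hQe 0 b (by omega) (by omega) (fun m h1 h2 => ⟨by omega, by omega⟩)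
          (by omega) (by omega) (fun m h => ⟨by omega, by omega⟩)
      have hsuppC2 : ∀ m, (m ≤ r ∨ (b ≤ m ∧ m ≤ j)) → p.getVert m ∈ C₂.support := by
        intro m hm
        rw [hC2def, Walk.support_cons, List.mem_cons, hQsupp, List.mem_append,
          List.mem_reverse]
        rcases hm with hm | hm
        · right; right
          rw [Walk.mem_support_take_iff p r hrL]
          exact ⟨m, hm, rfl⟩
        · right; left
          rw [memseg]
          exact ⟨m, hm.1, hm.2, rfl⟩
      have hCedges : C₂.edges = s(x0, p.getVert b) :: Q.edges := by
        rw [hC2def, Walk.edges_cons]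
      have notC2 : ∀ i1 j1 : ℕ, i1 ≤ p.length → j1 ≤ p.length →
          ¬(i1 = 0 ∧ j1 = b) → ¬(i1 = b ∧ j1 = 0) →
          (∀ m, b ≤ m → m < j → ¬(i1 = m ∧ j1 = m + 1) ∧ ¬(i1 = m + 1 ∧ j1 = m)) →
          ¬(i1 = j ∧ j1 = r) → ¬(i1 = r ∧ j1 = j) →
          (∀ m, m < r → ¬(i1 = m ∧ j1 = m + 1) ∧ ¬(i1 = m + 1 ∧ j1 = m)) →
          s(p.getVert i1, p.getVert j1) ∉ C₂.edges := by
        intro i1 j1 hi1 hj1 hcl1 hcl2 hseg hjr1 hjr2 htk hmem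
        rw [hCedges, List.mem_cons] at hmem
        rcases hmem with heq | hmem
        · rcases Sym2.eq_iff.mp heq with ⟨e1, e2⟩ | ⟨e1, e2⟩
          · exact hcl1 ⟨hinj _ hi1 _ (by omega) (e1.trans hx0.symm),
              hinj _ hj1 _ (by omega) e2⟩
          · exact hcl2 ⟨hinj _ hi1 _ (by omega) e1,
              hinj _ hj1 _ (by omega) (e2.trans hx0.symm)⟩
        · exact hQe i1 j1 hi1 hj1 hseg hjr1 hjr2 htk hmem
      refine ⟨x0, C₂, hcyc2, s(p.getVert 0, p.getVert c), s(p.getVert r, p.getVert b),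
        ?_, ⟨?_, ?_, ?_⟩, ⟨?_, ?_, ?_⟩⟩
      · intro heq
        rcases Sym2.eq_iff.mp heq with ⟨e1, e2⟩ | ⟨e1, e2⟩
        · have := hinj 0 (by omega) r (by omega) e1
          omega
        · have := hinj 0 (by omega) b (by omega) e1
          omega
      · rw [SimpleGraph.mem_edgeSet, hx0]
        exact hC
      · exact notC2 0 c (by omega) (by omega) (by omega) (by omega)
          (fun m h1 h2 => ⟨by omega, by omega⟩) (by omega) (by omega)
          (fun m h => ⟨by omega, by omega⟩)
      · intro x hxe
        rw [Sym2.mem_iff] at hxe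
        rcases hxe with rfl | rfl
        · exact hsuppC2 0 (by omega)
        · exact hsuppC2 c (by omega)
      · exact padj
      · exact notC2 r b (by omega) (by omega) (by omega) (by omega)
          (fun m h1 h2 => ⟨by omega, by omega⟩) (by omega) (by omega)
          (fun m h => ⟨by omega, by omega⟩)
      · intro x hxe
        rw [Sym2.mem_iff] at hxe
        rcases hxe with rfl | rfl
        · exact hsuppC2 r (by omega)
        · exact hsuppC2 b (by omega)


end MinDeg

section Transfer
variable {V W : Type*} {G : SimpleGraph V} {G' : SimpleGraph W}

lemma hasDCC_map (f : G →g G') (hf : Function.Injective f) (h : HasDCC G) : HasDCC G' := by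
  obtain ⟨v, c, hc, e1, e2, hne, ⟨he1, hn1, hs1⟩, ⟨he2, hn2, hs2⟩⟩ := h
  refine ⟨f v, c.map f, hc.map hf, e1.map f, e2.map f,
    fun h => hne (Sym2.map.injective hf h), ?_, ?_⟩
  · refine ⟨f.map_mem_edgeSet he1, ?_, ?_⟩
    · rw [Walk.edges_map]
      intro hmem
      rw [List.mem_map] at hmem
      obtain ⟨e', he', heq⟩ := hmem
      exact hn1 ((Sym2.map.injective hf heq) ▸ he')
    · intro x hx
      rw [Sym2.mem_map] at hx
      obtain ⟨y, hy, rfl⟩ := hx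
      rw [Walk.support_map]
      exact List.mem_map_of_mem (hs1 y hy)
  · refine ⟨f.map_mem_edgeSet he2, ?_, ?_⟩
    · rw [Walk.edges_map]
      intro hmem
      rw [List.mem_map] at hmem
      obtain ⟨e', he', heq⟩ := hmem
      exact hn2 ((Sym2.map.injective hf heq) ▸ he')
    · intro x hx
      rw [Sym2.mem_map] at hx
      obtain ⟨y, hy, rfl⟩ := hx
      rw [Walk.support_map]
      exact List.mem_map_of_mem (hs2 y hy)

end Transfer

section Count
variable {V : Type*} [Fintype V] [DecidableEq V]

lemma card_edge_delete (G : SimpleGraph V) [DecidableRel G.Adj] (v : V) :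
    letI : DecidableRel (G.comap (Subtype.val : {w // w ≠ v} → V)).Adj :=
      fun a b => inferInstanceAs (Decidable (G.Adj a.1 b.1))
    G.edgeFinset.card
      = (G.comap (Subtype.val : {w // w ≠ v} → V)).edgeFinset.card + G.degree v := by
  letI : DecidableRel (G.comap (Subtype.val : {w // w ≠ v} → V)).Adj :=
    fun a b => inferInstanceAs (Decidable (G.Adj a.1 b.1))
  have hsplit := Finset.card_filter_add_card_filter_not
    (s := G.edgeFinset) (fun e => v ∈ e)
  have hinc : G.edgeFinset.filter (fun e => v ∈ e) = G.incidenceFinset v := by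
    ext e
    simp [SimpleGraph.mem_incidenceFinset, SimpleGraph.incidenceSet,
      SimpleGraph.mem_edgeFinset, and_comm]
  have hdeg : (G.edgeFinset.filter (fun e => v ∈ e)).card = G.degree v := by
    rw [hinc, SimpleGraph.card_incidenceFinset_eq_degree]
  have hbij : (G.comap (Subtype.val : {w // w ≠ v} → V)).edgeFinset.card
      = (G.edgeFinset.filter (fun e => v ∉ e)).card := by
    refine Finset.card_bij (fun e _ => e.map Subtype.val) ?_ ?_ ?_
    · intro e he
      induction e with
      | _ a b =>
        rw [SimpleGraph.mem_edgeFinset, SimpleGraph.mem_edgeSet] at he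
        show Sym2.map Subtype.val s(a, b) ∈ _
        rw [Finset.mem_filter, Sym2.map_pair_eq, SimpleGraph.mem_edgeFinset,
          SimpleGraph.mem_edgeSet, Sym2.mem_iff]
        exact ⟨he, fun h => by
          rcases h with h | h
          · exact a.2 h.symm
          · exact b.2 h.symm⟩
    · intro e1 he1 e2 he2 heq
      exact Sym2.map.injective Subtype.val_injective heq
    · intro e he
      rw [Finset.mem_filter] at he
      obtain ⟨he, hv⟩ := he
      induction e with
      | _ a b =>
        rw [SimpleGraph.mem_edgeFinset, SimpleGraph.mem_edgeSet] at he
        rw [Sym2.mem_iff, not_or] at hv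
        refine ⟨s(⟨a, fun h => hv.1 h.symm⟩, ⟨b, fun h => hv.2 h.symm⟩), ?_, ?_⟩
        · rw [SimpleGraph.mem_edgeFinset, SimpleGraph.mem_edgeSet]
          exact he
        · show Sym2.map Subtype.val _ = _
          rw [Sym2.map_pair_eq]
  simp only [SimpleGraph.edgeFinset_card, Fintype.card_eq_nat_card] at hbij hsplit ⊢
  omega

end Count

lemma no_dcc_aux : ∀ (n : ℕ) (V : Type) [Fintype V] [DecidableEq V]
    (G : SimpleGraph V) [DecidableRel G.Adj], Fintype.card V = n → ¬ HasDCC G →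
    G.edgeFinset.card ≤ 2 * n - 3 := by
  intro n
  induction n using Nat.strong_induction_on with
  | _ n ih =>
    intro V _ _ G _ hcard hno
    rcases lt_or_ge n 3 with hn | hn
    · have hle := SimpleGraph.card_edgeFinset_le_card_choose_two (G := G)
      rw [hcard] at hle
      interval_cases n <;> simpa using hle
    · have hpos : 0 < Fintype.card V := by omega
      have : Nonempty V := Fintype.card_pos_iff.mp hpos
      by_cases hdeg : ∀ v : V, 3 ≤ G.degree v
      · exact absurd (hasDCC_of_minDegree G hdeg) hno
      · push_neg at hdeg
        obtain ⟨v, hv⟩ := hdeg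
        letI : DecidableRel (G.comap (Subtype.val : {w // w ≠ v} → V)).Adj :=
          fun a b => inferInstanceAs (Decidable (G.Adj a.1 b.1))
        have hcard' : Fintype.card {w // w ≠ v} = n - 1 := by
          rw [Fintype.card_subtype_compl, Fintype.card_subtype_eq, hcard]
        have hno' : ¬ HasDCC (G.comap (Subtype.val : {w // w ≠ v} → V)) := by
          intro h
          exact hno (hasDCC_map ⟨Subtype.val, fun h => h⟩ Subtype.val_injective h)
        have hih := ih (n-1) (by omega) {w // w ≠ v}
          (G.comap (Subtype.val : {w // w ≠ v} → V)) hcard' hno'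
        have hcount := card_edge_delete G v
        simp only [SimpleGraph.edgeFinset_card, Fintype.card_eq_nat_card] at hih hcount ⊢
        omega

theorem no_dcc_edge_bound (n : ℕ) (hn : 3 ≤ n) (G : SimpleGraph (Fin n))
    (h : ¬ HasDCC G) : Nat.card G.edgeSet ≤ 2 * n - 3 := by
  classical
  have := no_dcc_aux n (Fin n) G (Fintype.card_fin n) h
  rwa [Nat.card_eq_fintype_card, ← Set.toFinset_card]
end

section
/- If G is a simple graph on n vertices that contains no doubly chorded cycle, then G has a vertex of degree at most 2. -/
open SimpleGraph

open SimpleGraph Walk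

section AuxSection

variable {V : Type*} {G : SimpleGraph V}

namespace Aux

lemma takeUntil_cons_self [DecidableEq V] {a b c : V} (h : G.Adj a b) (q : G.Walk b c)
    (h' : a ∈ (Walk.cons h q).support) :
    (Walk.cons h q).takeUntil a h' = Walk.nil := by
  simp [Walk.takeUntil]

lemma mem_support_of_cons [DecidableEq V] {a b c w : V} (h : G.Adj a b) (q : G.Walk b c)
    (h' : w ∈ (Walk.cons h q).support) (hne : a ≠ w) : w ∈ q.support := by
  rw [Walk.support_cons, List.mem_cons] at h'
  rcases h' with h1 | h1
  · exact absurd h1.symm hne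
  · exact h1

lemma takeUntil_cons_ne [DecidableEq V] {a b c w : V} (h : G.Adj a b) (q : G.Walk b c)
    (h' : w ∈ (Walk.cons h q).support) (hne : a ≠ w) (h'' : w ∈ q.support) :
    (Walk.cons h q).takeUntil w h' = Walk.cons h (q.takeUntil w h'') := by
  simp [Walk.takeUntil, hne]

/-- getVert of a prefix agrees with getVert of the whole walk. -/
lemma getVert_takeUntil [DecidableEq V] {u v w : V} (p : G.Walk u v) (hw : w ∈ p.support)
    (j : ℕ) (hj : j ≤ (p.takeUntil w hw).length) :
    (p.takeUntil w hw).getVert j = p.getVert j := by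
  induction p generalizing j with
  | nil =>
    have hj0 : j = 0 := by
      have := Walk.length_takeUntil_le Walk.nil hw
      simp only [Walk.length_nil, Nat.le_zero] at this
      omega
    subst hj0
    rw [Walk.getVert_zero, Walk.getVert_zero]
  | @cons a b c h q ih =>
    by_cases hx : a = w
    · subst hx
      rw [takeUntil_cons_self] at hj ⊢
      simp only [Walk.length_nil, Nat.le_zero] at hj
      subst hj
      rw [Walk.getVert_zero, Walk.getVert_zero]
    · have h'' : w ∈ q.support := mem_support_of_cons h q hw hx
      rw [takeUntil_cons_ne h q hw hx h''] at hj ⊢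
      cases j with
      | zero => rw [Walk.getVert_zero, Walk.getVert_zero]
      | succ j =>
        rw [Walk.length_cons, Nat.succ_le_succ_iff] at hj
        rw [Walk.getVert_cons_succ, Walk.getVert_cons_succ]
        exact ih h'' j hj

/-- the vertex at the position given by takeUntil length is w itself -/
lemma getVert_length_takeUntil [DecidableEq V] {u v w : V} (p : G.Walk u v)
    (hw : w ∈ p.support) : p.getVert ((p.takeUntil w hw).length) = w := by
  rw [← getVert_takeUntil p hw _ (le_refl _)]
  exact Walk.getVert_length _

/-- getVert is injective on positions up to the length, for paths -/
lemma getVert_injOn {u v : V} {p : G.Walk u v} (hp : p.IsPath) {i j : ℕ}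
    (hi : i ≤ p.length) (hj : j ≤ p.length) (hij : p.getVert i = p.getVert j) : i = j := by
  induction p generalizing i j with
  | nil => simp at hi hj; omega
  | @cons a b c h q ih =>
    rw [Walk.cons_isPath_iff] at hp
    cases i with
    | zero =>
      cases j with
      | zero => rfl
      | succ j =>
        exfalso
        rw [Walk.length_cons, Nat.succ_le_succ_iff] at hj
        rw [Walk.getVert_zero, Walk.getVert_cons_succ] at hij
        exact hp.2 (Walk.mem_support_iff_exists_getVert.mpr ⟨j, hij.symm, hj⟩)
    | succ i =>
      cases j with
      | zero =>
        exfalso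
        rw [Walk.length_cons, Nat.succ_le_succ_iff] at hi
        rw [Walk.getVert_zero, Walk.getVert_cons_succ] at hij
        exact hp.2 (Walk.mem_support_iff_exists_getVert.mpr ⟨i, hij, hi⟩)
      | succ j =>
        rw [Walk.length_cons, Nat.succ_le_succ_iff] at hi hj
        rw [Walk.getVert_cons_succ, Walk.getVert_cons_succ] at hij
        exact congrArg Nat.succ (ih hp.1 hi hj hij)

/-- for a path, the takeUntil length of the i-th vertex is i. -/
lemma length_takeUntil_getVert [DecidableEq V] {u v : V} {p : G.Walk u v} (hp : p.IsPath)
    {i : ℕ} (hi : i ≤ p.length) (hmem : p.getVert i ∈ p.support) :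
    (p.takeUntil (p.getVert i) hmem).length = i := by
  apply getVert_injOn hp (Walk.length_takeUntil_le _ _) hi
  exact getVert_length_takeUntil p hmem

/-- every edge of a walk is an edge between consecutive getVerts -/
lemma edge_getVert {u v : V} (p : G.Walk u v) {e : Sym2 V} (he : e ∈ p.edges) :
    ∃ i, i < p.length ∧ e = s(p.getVert i, p.getVert (i + 1)) := by
  induction p with
  | nil => simp at he
  | @cons a b c h q ih =>
    rw [Walk.edges_cons, List.mem_cons] at he
    rcases he with he | he
    · refine ⟨0, by simp [Walk.length_cons], ?_⟩
      have h1 : (Walk.cons h q).getVert 0 = a := Walk.getVert_zero _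
      have h2 : (Walk.cons h q).getVert (0 + 1) = b := by
        rw [Walk.getVert_cons_succ, Walk.getVert_zero]
      rw [h1, h2, he]
    · obtain ⟨i, hi, hee⟩ := ih he
      exact ⟨i + 1, by rw [Walk.length_cons]; omega, by
        rw [Walk.getVert_cons_succ, Walk.getVert_cons_succ]; exact hee⟩

/-- length of takeUntil across an append, when the target is beyond the first part -/
lemma length_takeUntil_append [DecidableEq V] {a b c w : V} (q1 : G.Walk a b) (q2 : G.Walk b c)
    (hw : w ∈ (q1.append q2).support) (hw1 : w ∉ q1.support) (hw2 : w ∈ q2.support) :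
    ((q1.append q2).takeUntil w hw).length = q1.length + (q2.takeUntil w hw2).length := by
  induction q1 with
  | nil =>
    simp only [Walk.nil_append, Walk.length_nil, Nat.zero_add]
  | @cons x y d h q ih =>
    have hxw : x ≠ w := fun hh => hw1 (by rw [← hh]; exact Walk.start_mem_support _)
    have hw1' : w ∉ q.support := fun hh => hw1 (by rw [Walk.support_cons]; exact List.mem_cons_of_mem _ hh)
    have hmem : w ∈ (q.append q2).support := by
      rw [Walk.mem_support_append_iff]; exact Or.inr hw2
    show ((Walk.cons h (q.append q2)).takeUntil w hw).length
        = (Walk.cons h q).length + (q2.takeUntil w hw2).length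
    rw [takeUntil_cons_ne h (q.append q2) hw hxw hmem, Walk.length_cons, Walk.length_cons,
      ih q2 hmem hw1' hw2]
    omega

/-- if takeUntil has length 0 then the target is the start -/
lemma eq_start_of_length_takeUntil_zero [DecidableEq V] {u v w : V} (p : G.Walk u v)
    (hw : w ∈ p.support) (h0 : (p.takeUntil w hw).length = 0) : w = u := by
  have := getVert_length_takeUntil p hw
  rw [h0, Walk.getVert_zero] at this
  exact this.symm

/-- existence of a greatest natural satisfying a bounded nonempty predicate -/
lemma exists_greatest (P : ℕ → Prop) (B : ℕ) (hne : ∃ n, P n) (hbd : ∀ n, P n → n ≤ B) :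
    ∃ n, P n ∧ ∀ m, P m → m ≤ n := by
  classical
  obtain ⟨n0, hn0⟩ := hne
  refine ⟨Nat.findGreatest P B, Nat.findGreatest_spec (hbd n0 hn0) hn0, fun m hm => ?_⟩
  exact Nat.le_findGreatest (hbd m hm) hm

/-- a vertex of degree ≥ 3 has a neighbor avoiding any two prescribed vertices -/
lemma third_nbr [Fintype V] [DecidableEq V] {G : SimpleGraph V} [DecidableRel G.Adj] {x : V}
    (hdeg : 3 ≤ G.degree x) (a b : V) : ∃ w, G.Adj x w ∧ w ≠ a ∧ w ≠ b := by
  by_contra hcon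
  push_neg at hcon
  have hsub : G.neighborFinset x ⊆ {a, b} := by
    intro w hw
    rw [SimpleGraph.mem_neighborFinset] at hw
    rcases eq_or_ne w a with h1 | h1
    · simp [h1]
    · simp [hcon w hw h1]
  have := Finset.card_le_card hsub
  rw [← SimpleGraph.card_neighborFinset_eq_degree] at hdeg
  have : ({a, b} : Finset V).card ≤ 2 := Finset.card_insert_le _ _ |>.trans (by simp)
  omega

end Aux

set_option maxHeartbeats 2000000 in
theorem Aux.key {V : Type*} [Fintype V] [DecidableEq V] [Nonempty V] (G : SimpleGraph V)
    [DecidableRel G.Adj] (hno : ¬ HasDCC G) (hdeg : ∀ v : V, 3 ≤ G.degree v) : False := by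
  classical
  -- L : the maximum length of a path
  obtain ⟨L, ⟨u0, v0, p0, hp0, hp0len⟩, hLmax⟩ :=
    Aux.exists_greatest (fun n => ∃ (x y : V) (q : G.Walk x y), q.IsPath ∧ q.length = n)
      (Fintype.card V)
      ⟨0, Classical.arbitrary V, Classical.arbitrary V, Walk.nil, Walk.IsPath.nil, rfl⟩
      (by rintro n ⟨x, y, q, hq, rfl⟩; exact le_of_lt hq.length_lt)
  have F1 : ∀ (x y : V) (q : G.Walk x y), q.IsPath → q.length ≤ L := by
    intro x y q hq
    exact hLmax _ ⟨x, y, q, hq, rfl⟩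
  -- L ≥ 1
  have hL1 : 1 ≤ L := by
    obtain ⟨x⟩ := (inferInstance : Nonempty V)
    have h3 : 3 ≤ G.degree x := hdeg x
    have : 0 < (G.neighborFinset x).card := by
      rw [SimpleGraph.card_neighborFinset_eq_degree]; omega
    obtain ⟨y, hy⟩ := Finset.card_pos.mp this
    rw [SimpleGraph.mem_neighborFinset] at hy
    have hpath : (Walk.cons hy (Walk.nil : G.Walk y y)).IsPath := by
      rw [Walk.cons_isPath_iff]
      refine ⟨Walk.IsPath.nil, ?_⟩
      simp [hy.ne]
    have := F1 _ _ _ hpath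
    simpa using this
  -- r : the maximum "far neighbor position" over all longest paths
  have hne2 : ∃ k, ∃ (x y : V) (q : G.Walk x y), q.IsPath ∧ q.length = L ∧
      ∃ (w : V) (_ : G.Adj x w) (hw : w ∈ q.support), (q.takeUntil w hw).length = k := by
    have h0L : 0 < p0.length := by omega
    have hadj : G.Adj u0 (p0.getVert 1) := by
      have := p0.adj_getVert_succ h0L
      rwa [p0.getVert_zero] at this
    have hmem : p0.getVert 1 ∈ p0.support :=
      Walk.mem_support_iff_exists_getVert.mpr ⟨1, rfl, by omega⟩
    exact ⟨_, u0, v0, p0, hp0, hp0len, p0.getVert 1, hadj, hmem, rfl⟩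
  have hbd2 : ∀ k, (∃ (x y : V) (q : G.Walk x y), q.IsPath ∧ q.length = L ∧
      ∃ (w : V) (_ : G.Adj x w) (hw : w ∈ q.support), (q.takeUntil w hw).length = k) → k ≤ L := by
    rintro k ⟨x, y, q, hq, hqL, w, hadj, hw, rfl⟩
    exact le_trans (Walk.length_takeUntil_le q hw) (le_of_eq hqL)
  obtain ⟨r, ⟨u, v, p, hp, hpL, z, huz, hz, hzr⟩, hrmax⟩ :=
    Aux.exists_greatest _ L hne2 hbd2
  have F2 : ∀ (x y : V) (q : G.Walk x y), q.IsPath → q.length = L →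
      ∀ (w : V), G.Adj x w → ∀ (hw : w ∈ q.support), (q.takeUntil w hw).length ≤ r := by
    intro x y q hq hqL w hadj hw
    exact hrmax _ ⟨x, y, q, hq, hqL, w, hadj, hw, rfl⟩
  have G1 : ∀ (x y : V) (q : G.Walk x y), q.IsPath → q.length = L →
      ∀ w, G.Adj x w → w ∈ q.support := by
    intro x y q hq hqL w hadj
    by_contra hns
    have hpath : (Walk.cons hadj.symm q).IsPath := (Walk.cons_isPath_iff _ _).mpr ⟨hq, hns⟩
    have := F1 _ _ _ hpath
    rw [Walk.length_cons, hqL] at this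
    omega
  -- basic facts about p, Q, D
  set Q := p.takeUntil z hz with hQdef
  set D := p.dropUntil z hz with hDdef
  have hQlen : Q.length = r := hzr
  have hQpath : Q.IsPath := hp.takeUntil hz
  have hDpath : D.IsPath := hp.dropUntil hz
  have hspec : Q.append D = p := Walk.take_spec p hz
  have hrL : r ≤ p.length := by
    rw [← hQlen]; exact Walk.length_takeUntil_le p hz
  have hplen_total : p.length = r + D.length := by
    rw [← hspec, Walk.length_append, hQlen]
  have hpget0 : p.getVert 0 = u := p.getVert_zero
  have hpgetr : p.getVert r = z := by
    rw [← hQlen]; exact Aux.getVert_length_takeUntil p hz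
  have hQget : ∀ j, j ≤ r → Q.getVert j = p.getVert j := by
    intro j hj
    exact Aux.getVert_takeUntil p hz j (by rw [hzr]; omega)
  have hDget : ∀ j, D.getVert j = p.getVert (r + j) := by
    intro j
    conv_rhs => rw [← hspec]
    rw [Walk.getVert_append]
    simp [hQlen]
  have inj : ∀ i j : ℕ, i ≤ p.length → j ≤ p.length → p.getVert i = p.getVert j → i = j := by
    intro i j hi hj hij
    exact Aux.getVert_injOn hp hi hj hij
  -- position of any neighbor of u
  have hpos : ∀ w : V, G.Adj u w → ∃ i, i ≤ r ∧ p.getVert i = w := by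
    intro w hadj
    have hmem : w ∈ p.support := G1 u v p hp hpL w hadj
    exact ⟨(p.takeUntil w hmem).length, F2 u v p hp hpL w hadj hmem,
      Aux.getVert_length_takeUntil p hmem⟩
  -- the middle neighbor of u
  obtain ⟨xm, hadjm, hm1, hmz⟩ := Aux.third_nbr (hdeg u) (p.getVert 1) z
  obtain ⟨m, hmr, hgm⟩ := hpos xm hadjm
  have hm0 : m ≠ 0 := by
    intro h0
    rw [h0, hpget0] at hgm
    exact G.irrefl (hgm ▸ hadjm)
  have hmne1 : m ≠ 1 := by
    intro h1
    rw [h1] at hgm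
    exact hm1 hgm.symm
  have hmner : m ≠ r := by
    intro hmr'
    rw [hmr', hpgetr] at hgm
    exact hmz hgm.symm
  have hr3 : 3 ≤ r := by omega
  -- the cycle C
  have hzu : G.Adj z u := huz.symm
  set C : G.Walk z z := Walk.cons hzu Q with hCdef
  have hCedges : C.edges = s(z, u) :: Q.edges := Walk.edges_cons hzu Q
  have hCsupport : C.support = z :: Q.support := Walk.support_cons hzu Q
  -- no s(z,u) among Q's edges
  have h_no_zu : s(z, u) ∉ Q.edges := by
    intro hmem
    obtain ⟨i, hi, he⟩ := Aux.edge_getVert Q hmem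
    rw [hQlen] at hi
    rw [hQget i (by omega), hQget (i+1) (by omega)] at he
    rw [Sym2.eq_iff] at he
    rcases he with ⟨he1, he2⟩ | ⟨he1, he2⟩
    · have := inj r i (by omega) (by omega) (by rw [hpgetr, he1])
      omega
    · have hi0 : i = 0 := inj i 0 (by omega) (by omega) (by rw [hpget0, ← he2])
      have := inj r (i+1) (by omega) (by omega) (by rw [hpgetr, he1])
      omega
  have hCcyc : C.IsCycle := (Walk.cons_isCycle_iff Q hzu).mpr ⟨hQpath, h_no_zu⟩
  -- membership of early vertices in Q's support
  have hQmem : ∀ i, i ≤ r → p.getVert i ∈ Q.support := by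
    intro i hi
    exact Walk.mem_support_iff_exists_getVert.mpr ⟨i, hQget i hi, by rw [hQlen]; omega⟩
  -- chord 1 : s(u, xm)
  have hchord1 : IsChord G C (s(u, xm)) := by
    refine ⟨G.mem_edgeSet.mpr hadjm, ?_, ?_⟩
    · rw [hCedges]
      intro hmem
      rcases List.mem_cons.mp hmem with he | he
      · rw [Sym2.eq_iff] at he
        rcases he with ⟨he1, he2⟩ | ⟨he1, he2⟩
        · exact hzu.ne he1.symm
        · exact hmz he2
      · obtain ⟨i, hi, he⟩ := Aux.edge_getVert Q he
        rw [hQlen] at hi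
        rw [hQget i (by omega), hQget (i+1) (by omega)] at he
        rw [Sym2.eq_iff] at he
        rcases he with ⟨he1, he2⟩ | ⟨he1, he2⟩
        · have hi0 : (0:ℕ) = i := inj 0 i (by omega) (by omega) (hpget0.trans he1)
          have hm1' : m = 1 := by
            apply inj m 1 (by omega) (by omega)
            rw [hgm, he2, ← hi0]
          omega
        · have : (0 : ℕ) = i + 1 := inj 0 (i+1) (by omega) (by omega) (hpget0.trans he1)
          omega
    · intro x hx
      rw [Sym2.mem_iff] at hx
      rw [hCsupport]
      rcases hx with rfl | rfl
      · exact List.mem_cons_of_mem _ (Walk.start_mem_support Q)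
      · exact List.mem_cons_of_mem _ (by rw [← hgm]; exact hQmem m (by omega))
  -- the master index lemma : any G-edge between two vertices of positions ≤ r
  have master : ∀ i j : ℕ, i ≤ r → j ≤ r → G.Adj (p.getVert i) (p.getVert j) →
      j = i + 1 ∨ i = j + 1 ∨ (i = 0 ∧ j = r) ∨ (j = 0 ∧ i = r) ∨
      (i = 0 ∧ j = m) ∨ (j = 0 ∧ i = m) := by
    intro i j hir hjr hadj
    by_cases hmemC : s(p.getVert i, p.getVert j) ∈ C.edges
    · rw [hCedges] at hmemC
      rcases List.mem_cons.mp hmemC with he | he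
      · rw [Sym2.eq_iff] at he
        rcases he with ⟨he1, he2⟩ | ⟨he1, he2⟩
        · have h1 : i = r := inj i r (by omega) (by omega) (he1.trans hpgetr.symm)
          have h2 : j = 0 := inj j 0 (by omega) (by omega) (he2.trans hpget0.symm)
          tauto
        · have h1 : i = 0 := inj i 0 (by omega) (by omega) (he1.trans hpget0.symm)
          have h2 : j = r := inj j r (by omega) (by omega) (he2.trans hpgetr.symm)
          tauto
      · obtain ⟨k, hk, he⟩ := Aux.edge_getVert Q he
        rw [hQlen] at hk
        rw [hQget k (by omega), hQget (k+1) (by omega)] at he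
        rw [Sym2.eq_iff] at he
        rcases he with ⟨he1, he2⟩ | ⟨he1, he2⟩
        · have h1 : i = k := inj i k (by omega) (by omega) he1
          have h2 : j = k + 1 := inj j (k+1) (by omega) (by omega) he2
          omega
        · have h1 : i = k + 1 := inj i (k+1) (by omega) (by omega) he1
          have h2 : j = k := inj j k (by omega) (by omega) he2
          omega
    · -- then it must be the unique chord s(u, xm)
      have heq : s(p.getVert i, p.getVert j) = s(u, xm) := by
        by_contra hne
        refine hno ⟨z, C, hCcyc, s(u, xm), s(p.getVert i, p.getVert j), Ne.symm hne, hchord1, ?_⟩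
        refine ⟨G.mem_edgeSet.mpr hadj, hmemC, ?_⟩
        intro x hx
        rw [Sym2.mem_iff] at hx
        rw [hCsupport]
        rcases hx with rfl | rfl
        · exact List.mem_cons_of_mem _ (hQmem i hir)
        · exact List.mem_cons_of_mem _ (hQmem j hjr)
      rw [Sym2.eq_iff] at heq
      rcases heq with ⟨he1, he2⟩ | ⟨he1, he2⟩
      · have h1 : i = 0 := inj i 0 (by omega) (by omega) (he1.trans hpget0.symm)
        have h2 : j = m := inj j m (by omega) (by omega) (he2.trans hgm.symm)
        tauto
      · have h1 : j = 0 := inj j 0 (by omega) (by omega) (he2.trans hpget0.symm)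
        have h2 : i = m := inj i m (by omega) (by omega) (he1.trans hgm.symm)
        tauto
  -- the first rotation
  have hmem_a1 : p.getVert (r-1) ∈ p.support :=
    Walk.mem_support_iff_exists_getVert.mpr ⟨r-1, rfl, by omega⟩
  set T1 := p.takeUntil (p.getVert (r-1)) hmem_a1 with hT1def
  have hT1len : T1.length = r - 1 := Aux.length_takeUntil_getVert hp (by omega) hmem_a1
  set A1 := T1.reverse with hA1def
  have hT1mem : ∀ y, y ∈ T1.support → ∃ j, j ≤ r - 1 ∧ p.getVert j = y := by
    intro y hy
    obtain ⟨j, hjy, hjle⟩ := Walk.mem_support_iff_exists_getVert.mp hy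
    refine ⟨j, by omega, ?_⟩
    rw [← Aux.getVert_takeUntil p hmem_a1 j hjle]
    exact hjy
  have hDmem : ∀ y, y ∈ D.support → ∃ j, j ≤ D.length ∧ p.getVert (r + j) = y := by
    intro y hy
    obtain ⟨j, hjy, hjle⟩ := Walk.mem_support_iff_exists_getVert.mp hy
    exact ⟨j, hjle, by rw [← hDget j]; exact hjy⟩
  set P1 := A1.append (Walk.cons huz D) with hP1def
  have hP1len : P1.length = L := by
    rw [hP1def, Walk.length_append, hA1def, Walk.length_reverse, hT1len, Walk.length_cons]
    omega
  have hP1path : P1.IsPath := by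
    rw [Walk.isPath_def, hP1def, Walk.support_append, Walk.support_cons, List.tail_cons,
      List.nodup_append]
    refine ⟨?_, hDpath.support_nodup, ?_⟩
    · rw [hA1def, Walk.support_reverse, List.nodup_reverse]
      exact (hp.takeUntil hmem_a1).support_nodup
    · intro y hy1 y' hy2 hyy'
      subst hyy'
      rw [hA1def, Walk.support_reverse, List.mem_reverse] at hy1
      obtain ⟨j, hjle, hjy⟩ := hT1mem y hy1
      obtain ⟨j', hj'le, hj'y⟩ := hDmem y hy2
      have := inj j (r + j') (by omega) (by omega) (hjy.trans hj'y.symm)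
      omega
  -- the third neighbor of x_{r-1}
  obtain ⟨w, hadjw, hwne1, hwne2⟩ := Aux.third_nbr (hdeg (p.getVert (r-1))) (p.getVert (r-2)) z
  have hwsupp : w ∈ P1.support := G1 _ _ P1 hP1path hP1len w hadjw
  have hsplit : w ∈ T1.support ∨ w = u ∨ w ∈ D.support := by
    rw [hP1def, Walk.mem_support_append_iff] at hwsupp
    rcases hwsupp with hc | hc
    · rw [hA1def, Walk.support_reverse, List.mem_reverse] at hc
      exact Or.inl hc
    · rw [Walk.support_cons, List.mem_cons] at hc
      exact Or.inr hc
  have main_case : ∀ j, j ≤ r - 1 → p.getVert j = w →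
      (G.Adj u (p.getVert (r-1)) ∧ m = r - 1) := by
    intro j hj hgw
    have hadj' : G.Adj (p.getVert (r-1)) (p.getVert j) := by rw [hgw]; exact hadjw
    rcases master (r-1) j (by omega) (by omega) hadj' with hc | hc | hc | hc | hc | hc
    · exact absurd hc (by omega)
    · exact absurd (by rw [← hgw]; congr 1; omega : w = p.getVert (r-2)) hwne1
    · exact absurd hc (by omega)
    · exact absurd hc (by omega)
    · exact absurd hc (by omega)
    · have hwu : w = u := by rw [← hgw, hc.1, hpget0]
      refine ⟨?_, by omega⟩
      exact (hwu ▸ hadjw).symm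
  have hkey1 : G.Adj u (p.getVert (r-1)) ∧ m = r - 1 := by
    rcases hsplit with hcase | hcase | hcase
    · obtain ⟨j, hjle, hjy⟩ := hT1mem w hcase
      exact main_case j hjle hjy
    · exact main_case 0 (by omega) (hpget0.trans hcase.symm)
    · exfalso
      obtain ⟨j', hj'le, hj'y⟩ := hDmem w hcase
      rcases Nat.eq_zero_or_pos j' with hj0 | hj1
      · apply hwne2
        rw [← hj'y, hj0, Nat.add_zero, hpgetr]
      · -- far position : contradicts maximality of r
        have hwnA1 : w ∉ A1.support := by
          intro hy1
          rw [hA1def, Walk.support_reverse, List.mem_reverse] at hy1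
          obtain ⟨j, hjle, hjy⟩ := hT1mem w hy1
          have := inj j (r + j') (by omega) (by omega) (hjy.trans hj'y.symm)
          omega
        have hwQ2 : w ∈ (Walk.cons huz D).support := by
          rw [Walk.support_cons]; exact List.mem_cons_of_mem _ hcase
        have hwsupp' : w ∈ (A1.append (Walk.cons huz D)).support := by
          rw [← hP1def]; exact hwsupp
        have hlen1 := Aux.length_takeUntil_append A1 (Walk.cons huz D) hwsupp' hwnA1 hwQ2
        have hwneu : w ≠ u := by
          intro he
          have := inj (r + j') 0 (by omega) (by omega) (hj'y.trans (he.trans hpget0.symm))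
          omega
        have hcons_eq := Aux.takeUntil_cons_ne huz D hwQ2 hwneu.symm hcase
        have hge1 : 1 ≤ (D.takeUntil w hcase).length := by
          rcases Nat.eq_zero_or_pos (D.takeUntil w hcase).length with h0 | h1
          · exact absurd (Aux.eq_start_of_length_takeUntil_zero D hcase h0) hwne2
          · exact h1
        have hF2 := F2 _ _ P1 hP1path hP1len w hadjw hwsupp
        have hF2' : ((A1.append (Walk.cons huz D)).takeUntil w hwsupp').length ≤ r := hF2
        rw [hlen1, hcons_eq, Walk.length_cons, hA1def, Walk.length_reverse, hT1len] at hF2'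
        omega
  obtain ⟨hadj_u_a1, hm_eq⟩ := hkey1
  -- adjacency x_{r-1} ~ z along p
  have hadj_a1_z : G.Adj (p.getVert (r-1)) z := by
    have := p.adj_getVert_succ (show r - 1 < p.length by omega)
    rw [show r - 1 + 1 = r by omega, hpgetr] at this
    exact this
  -- the second rotation
  have hmem_a2 : p.getVert (r-2) ∈ p.support :=
    Walk.mem_support_iff_exists_getVert.mpr ⟨r-2, rfl, by omega⟩
  set T2 := p.takeUntil (p.getVert (r-2)) hmem_a2 with hT2def
  have hT2len : T2.length = r - 2 := Aux.length_takeUntil_getVert hp (by omega) hmem_a2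
  set A2 := T2.reverse with hA2def
  have hT2mem : ∀ y, y ∈ T2.support → ∃ j, j ≤ r - 2 ∧ p.getVert j = y := by
    intro y hy
    obtain ⟨j, hjy, hjle⟩ := Walk.mem_support_iff_exists_getVert.mp hy
    refine ⟨j, by omega, ?_⟩
    rw [← Aux.getVert_takeUntil p hmem_a2 j hjle]
    exact hjy
  set inner2 : G.Walk u v := Walk.cons hadj_u_a1 (Walk.cons hadj_a1_z D) with hInner2def
  set P2 := A2.append inner2 with hP2def
  have hP2len : P2.length = L := by
    rw [hP2def, Walk.length_append, hA2def, Walk.length_reverse, hT2len, hInner2def,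
      Walk.length_cons, Walk.length_cons]
    omega
  have ha1_notD : p.getVert (r-1) ∉ D.support := by
    intro hmem
    obtain ⟨j', hj'le, hj'y⟩ := hDmem _ hmem
    have := inj (r + j') (r-1) (by omega) (by omega) hj'y
    omega
  have hP2path : P2.IsPath := by
    rw [Walk.isPath_def, hP2def, Walk.support_append, hInner2def, Walk.support_cons,
      List.tail_cons, Walk.support_cons, List.nodup_append]
    refine ⟨?_, ?_, ?_⟩
    · rw [hA2def, Walk.support_reverse, List.nodup_reverse]
      exact (hp.takeUntil hmem_a2).support_nodup
    · rw [List.nodup_cons]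
      exact ⟨ha1_notD, hDpath.support_nodup⟩
    · intro y hy1 y' hy2 hyy'
      subst hyy'
      rw [hA2def, Walk.support_reverse, List.mem_reverse] at hy1
      obtain ⟨j, hjle, hjy⟩ := hT2mem y hy1
      rcases List.mem_cons.mp hy2 with hy2' | hy2'
      · have := inj j (r-1) (by omega) (by omega) (by rw [hjy, hy2'])
        omega
      · obtain ⟨j', hj'le, hj'y⟩ := hDmem y hy2'
        have := inj j (r + j') (by omega) (by omega) (hjy.trans hj'y.symm)
        omega
  -- the third neighbor of x_{r-2}
  obtain ⟨w2, hadjw2, hw2ne1, hw2ne2⟩ :=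
    Aux.third_nbr (hdeg (p.getVert (r-2))) (p.getVert (r-3)) (p.getVert (r-1))
  have hw2supp : w2 ∈ P2.support := G1 _ _ P2 hP2path hP2len w2 hadjw2
  have final : ∀ j, j ≤ r → p.getVert j = w2 → False := by
    intro j hj hgw
    have hadj' : G.Adj (p.getVert (r-2)) (p.getVert j) := by rw [hgw]; exact hadjw2
    rcases master (r-2) j (by omega) (by omega) hadj' with hc | hc | hc | hc | hc | hc
    · exact hw2ne2 (by rw [← hgw]; congr 1; omega)
    · exact hw2ne1 (by rw [← hgw]; congr 1; omega)
    · omega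
    · omega
    · omega
    · omega
  have hsplit2 : w2 ∈ T2.support ∨ w2 = u ∨ w2 = p.getVert (r-1) ∨ w2 ∈ D.support := by
    rw [hP2def, Walk.mem_support_append_iff] at hw2supp
    rcases hw2supp with hc | hc
    · rw [hA2def, Walk.support_reverse, List.mem_reverse] at hc
      exact Or.inl hc
    · rw [hInner2def, Walk.support_cons, List.mem_cons] at hc
      rcases hc with hc | hc
      · exact Or.inr (Or.inl hc)
      · rw [Walk.support_cons, List.mem_cons] at hc
        exact Or.inr (Or.inr hc)
  rcases hsplit2 with hcase | hcase | hcase | hcase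
  · obtain ⟨j, hjle, hjy⟩ := hT2mem w2 hcase
    exact final j (by omega) hjy
  · exact final 0 (by omega) (hpget0.trans hcase.symm)
  · exact final (r-1) (by omega) hcase.symm
  · obtain ⟨j', hj'le, hj'y⟩ := hDmem w2 hcase
    rcases Nat.eq_zero_or_pos j' with hj0 | hj1
    · refine final r (le_refl r) ?_
      rw [← hj'y, hj0, Nat.add_zero]
    · -- far position : contradicts maximality of r
      have hw2nA2 : w2 ∉ A2.support := by
        intro hy1
        rw [hA2def, Walk.support_reverse, List.mem_reverse] at hy1
        obtain ⟨j, hjle, hjy⟩ := hT2mem w2 hy1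
        have := inj j (r + j') (by omega) (by omega) (hjy.trans hj'y.symm)
        omega
      have hw2in1 : w2 ∈ (Walk.cons hadj_a1_z D).support := by
        rw [Walk.support_cons]; exact List.mem_cons_of_mem _ hcase
      have hw2inner : w2 ∈ inner2.support := by
        rw [hInner2def, Walk.support_cons]; exact List.mem_cons_of_mem _ hw2in1
      have hw2supp' : w2 ∈ (A2.append inner2).support := hw2supp
      have hlen1 := Aux.length_takeUntil_append A2 inner2 hw2supp' hw2nA2 hw2inner
      have hw2neu : u ≠ w2 := by
        intro he
        have := inj (r + j') 0 (by omega) (by omega) (hj'y.trans (he ▸ hpget0.symm))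
        omega
      have hw2nea1 : p.getVert (r-1) ≠ w2 := fun he => hw2ne2 he.symm
      have hinner_eq : inner2.takeUntil w2 hw2inner
          = Walk.cons hadj_u_a1 ((Walk.cons hadj_a1_z D).takeUntil w2 hw2in1) :=
        Aux.takeUntil_cons_ne hadj_u_a1 _ hw2inner hw2neu hw2in1
      have hcons_eq2 := Aux.takeUntil_cons_ne hadj_a1_z D hw2in1 hw2nea1 hcase
      have hge1 : 1 ≤ (D.takeUntil w2 hcase).length := by
        rcases Nat.eq_zero_or_pos (D.takeUntil w2 hcase).length with h0 | h1
        · exfalso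
          have hw2z : w2 = z := Aux.eq_start_of_length_takeUntil_zero D hcase h0
          have := inj (r + j') r (by omega) (by omega) (by rw [hj'y, hpgetr, hw2z])
          omega
        · exact h1
      have hF2 := F2 _ _ P2 hP2path hP2len w2 hadjw2 hw2supp
      have hF2' : ((A2.append inner2).takeUntil w2 hw2supp').length ≤ r := hF2
      rw [hlen1, hinner_eq, Walk.length_cons, hcons_eq2, Walk.length_cons, hA2def,
        Walk.length_reverse, hT2len] at hF2'
      omega


end AuxSection

theorem no_dcc_min_degree (n : ℕ) (hn : 0 < n) (G : SimpleGraph (Fin n))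
    [DecidableRel G.Adj] (h : ¬ HasDCC G) : ∃ v : Fin n, G.degree v ≤ 2 := by
  by_contra hcon
  push_neg at hcon
  have : Nonempty (Fin n) := ⟨⟨0, hn⟩⟩
  exact (Aux.key G h (fun v => by have := hcon v; omega)).elim
end

section
/- The complete tripartite graph K_{1,1,n-2} on n vertices contains no doubly chorded cycle, and it has exactly 2n - 3 edges. -/
open SimpleGraph

/-- The complete tripartite graph `K_{1,1,n-2}` on `Fin n`: vertices `0` and `1` are the
two singleton parts, the other `n-2` vertices form an independent set. -/
def K11 (n : ℕ) : SimpleGraph (Fin n) where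
  Adj v w := v ≠ w ∧ (v.val < 2 ∨ w.val < 2)
  symm := ⟨by intro v w h; exact ⟨h.1.symm, h.2.symm⟩⟩
  loopless := ⟨fun v h => h.1 rfl⟩

/-- In a cycle, every support vertex has two distinct neighbors along the cycle. -/
lemma cycle_two_nbrs {V : Type*} {G : SimpleGraph V} {v x : V} {c : G.Walk v v}
    (hc : c.IsCycle) (hx : x ∈ c.support) :
    ∃ a b : V, a ≠ b ∧ G.Adj x a ∧ G.Adj x b ∧ s(x, a) ∈ c.edges ∧ s(x, b) ∈ c.edges := by
  classical
  set c' := c.rotate x hx with hc'def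
  have hc' : c'.IsCycle := hc.rotate hx
  have hrot : c'.edges ~r c.edges := c.rotate_edges x hx
  have hmem : ∀ e, e ∈ c'.edges → e ∈ c.edges := fun e he => hrot.mem_iff.mp he
  have hnn : ¬ c'.Nil := hc'.not_nil
  obtain ⟨a, ha, q, hq⟩ := SimpleGraph.Walk.not_nil_iff.mp hnn
  have hnnr : ¬ c'.reverse.Nil := by
    rw [SimpleGraph.Walk.not_nil_iff_lt_length] at hnn ⊢
    simpa using hnn
  obtain ⟨b, hb, q₂, hq₂⟩ := SimpleGraph.Walk.not_nil_iff.mp hnnr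
  have hea : c'.edges = s(x, a) :: q.edges := by rw [hq]; simp
  have heb : s(x, b) ∈ c'.edges := by
    have : s(x, b) ∈ c'.reverse.edges := by rw [hq₂]; simp
    rwa [SimpleGraph.Walk.edges_reverse, List.mem_reverse] at this
  have hlen : 3 ≤ c'.length := hc'.three_le_length
  have hnd : c'.edges.Nodup := hc'.isTrail.edges_nodup
  have hne : s(x, a) ≠ s(x, b) := by
    intro heq
    -- then the first edge equals the last edge
    have hrevedges : c'.edges.reverse = s(x, b) :: q₂.edges := by
      rw [← SimpleGraph.Walk.edges_reverse, hq₂]; simp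
    have h2 : c'.edges = q₂.edges.reverse ++ [s(x, b)] := by
      have := congrArg List.reverse hrevedges
      simpa using this
    rw [hea, ← heq] at h2
    rcases h3 : q₂.edges.reverse with _ | ⟨e, t⟩
    · rw [h3] at h2
      simp at h2
      have hl : c'.length = c'.edges.length := (SimpleGraph.Walk.length_edges c').symm
      have := SimpleGraph.Walk.nil_iff_length_eq.mp h2
      rw [hea] at hl
      simp at hl
      omega
    · rw [h3] at h2
      simp at h2
      have : s(x, a) ∈ q.edges := by rw [h2.2]; simp
      rw [hea] at hnd
      exact (List.nodup_cons.mp hnd).1 this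
  have hab : a ≠ b := fun h => hne (by rw [h])
  have hbadj : G.Adj x b := hb
  exact ⟨a, b, hab, ha, hbadj, hmem _ (by rw [hea]; simp), hmem _ heb⟩

instance K11.adjDecidable (n : ℕ) : DecidableRel (K11 n).Adj :=
  fun v w => decidable_of_iff (v ≠ w ∧ (v.val < 2 ∨ w.val < 2)) Iff.rfl

theorem K11_no_dcc_and_card (n : ℕ) (hn : 3 ≤ n) :
    ¬ HasDCC (K11 n) ∧ Nat.card (K11 n).edgeSet = 2 * n - 3 := by
  haveI : NeZero n := ⟨by omega⟩
  have h0 : ((0 : Fin n) : ℕ) = 0 := by simp [Fin.val_zero]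
  have h1 : ((1 : Fin n) : ℕ) = 1 := by
    rw [Fin.val_one']
    exact Nat.mod_eq_of_lt (by omega)
  constructor
  · -- no doubly chorded cycle
    rintro ⟨v, c, hc, e₁, e₂, hne, h₁, h₂⟩
    have key : ∀ e : Sym2 (Fin n), IsChord (K11 n) c e → e = s((0 : Fin n), 1) := by
      intro e he
      obtain ⟨hadj, hnotc, hsupp⟩ := he
      induction e using Sym2.inductionOn with
      | hf x y =>
        rw [SimpleGraph.mem_edgeSet] at hadj
        obtain ⟨hxy, hlt⟩ := hadj
        -- subclaim: no endpoint can have value ≥ 2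
        have noBig : ∀ p q : Fin n, p ≠ q → (p.val < 2 ∨ q.val < 2) →
            s(p, q) ∉ c.edges → (∀ z ∈ s(p, q), z ∈ c.support) → ¬ 2 ≤ p.val := by
          intro p q hpq hlt2 hnc hsup hp2
          have hqlt : q.val < 2 := by omega
          have hps : p ∈ c.support := hsup p (by simp)
          obtain ⟨a, b, hab, hpa, hpb, hea, heb⟩ := cycle_two_nbrs hc hps
          have halt : a.val < 2 := by
            rcases hpa.2 with h | h
            · omega
            · exact h
          have hblt : b.val < 2 := by
            rcases hpb.2 with h | h
            · omega
            · exact h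
          -- q = a or q = b since a ≠ b and all of a,b,q have val < 2
          have : q = a ∨ q = b := by
            by_contra hcon
            push_neg at hcon
            have hav : a.val = 0 ∨ a.val = 1 := by omega
            have hbv : b.val = 0 ∨ b.val = 1 := by omega
            have hqv : q.val = 0 ∨ q.val = 1 := by omega
            have habv : a.val ≠ b.val := fun h => hab (Fin.ext h)
            have hqa : q.val ≠ a.val := fun h => hcon.1 (Fin.ext h)
            have hqb : q.val ≠ b.val := fun h => hcon.2 (Fin.ext h)
            omega
          rcases this with rfl | rfl
          · exact hnc hea
          · exact hnc heb
        have hx2 : ¬ 2 ≤ x.val := noBig x y hxy hlt hnotc hsupp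
        have hy2 : ¬ 2 ≤ y.val := by
          have := noBig y x hxy.symm (Or.symm hlt)
            (by rwa [Sym2.eq_swap]) (by rw [Sym2.eq_swap]; exact hsupp)
          exact this
        -- both < 2, distinct, so {x,y} = {0,1}
        have hxv : x.val = 0 ∨ x.val = 1 := by omega
        have hyv : y.val = 0 ∨ y.val = 1 := by omega
        have hxyv : x.val ≠ y.val := fun h => hxy (Fin.ext h)
        rcases hxv with hx | hx <;> rcases hyv with hy | hy
        · omega
        · have : x = 0 := Fin.ext (by rw [h0]; exact hx)
          have hy' : y = 1 := Fin.ext (by rw [h1]; exact hy)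
          rw [this, hy']
        · have : x = 1 := Fin.ext (by rw [h1]; exact hx)
          have hy' : y = 0 := Fin.ext (by rw [h0]; exact hy)
          rw [this, hy', Sym2.eq_swap]
        · omega
    exact hne ((key e₁ h₁).trans (key e₂ h₂).symm)
  · -- edge count
    classical
    have hdeg : ∀ v : Fin n, (K11 n).degree v = if v.val < 2 then n - 1 else 2 := by
      intro v
      by_cases hv : v.val < 2
      · rw [if_pos hv]
        have : (K11 n).neighborFinset v = Finset.univ.erase v := by
          ext w
          simp only [SimpleGraph.mem_neighborFinset, Finset.mem_erase, Finset.mem_univ, and_true]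
          exact ⟨fun h => h.1.symm, fun h => ⟨h.symm, Or.inl hv⟩⟩
        rw [SimpleGraph.degree, this, Finset.card_erase_of_mem (Finset.mem_univ v)]
        simp
      · rw [if_neg hv]
        have : (K11 n).neighborFinset v = {(0 : Fin n), 1} := by
          ext w
          simp only [SimpleGraph.mem_neighborFinset, Finset.mem_insert, Finset.mem_singleton]
          constructor
          · rintro ⟨hne, hlt⟩
            have hwlt : w.val < 2 := by omega
            have : w.val = 0 ∨ w.val = 1 := by omega
            rcases this with h | h
            · left; exact Fin.ext (by rw [h0]; exact h)
            · right; exact Fin.ext (by rw [h1]; exact h)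
          · rintro (rfl | rfl)
            · exact ⟨fun h => hv (by rw [h, h0]; omega), Or.inr (by rw [h0]; omega)⟩
            · exact ⟨fun h => hv (by rw [h, h1]; omega), Or.inr (by rw [h1]; omega)⟩
        rw [SimpleGraph.degree, this, Finset.card_insert_of_notMem, Finset.card_singleton]
        simp only [Finset.mem_singleton]
        intro h
        have := congrArg Fin.val h
        rw [h0, h1] at this
        omega
    have hsum := (K11 n).sum_degrees_eq_twice_card_edges
    have hfilter : (Finset.univ.filter (fun v : Fin n => v.val < 2)).card = 2 := by
      have : (Finset.univ.filter (fun v : Fin n => v.val < 2)) = {(0 : Fin n), 1} := by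
        ext w
        simp only [Finset.mem_filter, Finset.mem_univ, true_and, Finset.mem_insert,
          Finset.mem_singleton]
        constructor
        · intro hw
          have : w.val = 0 ∨ w.val = 1 := by omega
          rcases this with h | h
          · left; exact Fin.ext (by rw [h0]; exact h)
          · right; exact Fin.ext (by rw [h1]; exact h)
        · rintro (rfl | rfl)
          · rw [h0]; omega
          · rw [h1]; omega
      rw [this, Finset.card_insert_of_notMem, Finset.card_singleton]
      simp only [Finset.mem_singleton]
      intro h
      have := congrArg Fin.val h
      rw [h0, h1] at this
      omega
    have hsumval : ∑ v : Fin n, (K11 n).degree v = 2 * (n - 1) + (n - 2) * 2 := by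
      rw [← Finset.sum_filter_add_sum_filter_not Finset.univ (fun v : Fin n => v.val < 2)]
      have e1 : ∑ v ∈ Finset.univ.filter (fun v : Fin n => v.val < 2), (K11 n).degree v
          = 2 * (n - 1) := by
        rw [Finset.sum_congr rfl (fun v hv => by
          rw [hdeg v, if_pos (Finset.mem_filter.mp hv).2]), Finset.sum_const, hfilter]
        ring_nf
      have e2 : ∑ v ∈ Finset.univ.filter (fun v : Fin n => ¬ v.val < 2), (K11 n).degree v
          = (n - 2) * 2 := by
        rw [Finset.sum_congr rfl (fun v hv => by
          rw [hdeg v, if_neg (Finset.mem_filter.mp hv).2]), Finset.sum_const]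
        have : (Finset.univ.filter (fun v : Fin n => ¬ v.val < 2)).card = n - 2 := by
          have := Finset.card_filter_add_card_filter_not
            (s := (Finset.univ : Finset (Fin n))) (p := fun v : Fin n => v.val < 2)
          rw [hfilter] at this
          simp only [Finset.card_univ, Fintype.card_fin] at this
          omega
        rw [this]
        ring
      rw [e1, e2]
    rw [hsumval] at hsum
    have hcard : Nat.card (K11 n).edgeSet = (K11 n).edgeFinset.card := by
      rw [Nat.card_eq_fintype_card, SimpleGraph.edgeFinset, Set.toFinset_card]
    rw [hcard]
    omega
end

section
/- The spectral radius of the graph K_1 ∨ rK_3 (the join of a single vertex with r disjoint triangles), which has n = 3r+1 vertices, equals 1 + sqrt(n). -/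
open SimpleGraph
section helpers
open Matrix Finset

lemma perronUpper {n : Type*} [Fintype n] (A : Matrix n n ℝ)
    (h0 : ∀ i j, 0 ≤ A i j) (μ ν : ℝ) (w x : n → ℝ) (hw : ∀ i, 0 < w i)
    (hAw : A *ᵥ w = μ • w) (hx : x ≠ 0) (hAx : A *ᵥ x = ν • x) : ν ≤ μ := by
  have hne : (Finset.univ : Finset n).Nonempty := by
    rcases Function.ne_iff.mp hx with ⟨j, hj⟩
    exact ⟨j, mem_univ j⟩
  obtain ⟨i, -, hi⟩ := Finset.exists_max_image univ (fun j => |x j| / w j) hne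
  set t := |x i| / w i with ht
  have hbound : ∀ j, |x j| ≤ t * w j := fun j => by
    have := hi j (mem_univ j)
    rw [div_le_div_iff₀ (hw j) (hw i)] at this
    calc |x j| = |x j| * w i / w i := by rw [mul_div_assoc, div_self (hw i).ne', mul_one]
      _ ≤ |x i| * w j / w i := by gcongr; exact (hw i).le
      _ = t * w j := by rw [ht, div_mul_eq_mul_div]
  have htpos : 0 < t := by
    rcases Function.ne_iff.mp hx with ⟨j, hj⟩
    have : 0 < |x j| / w j := div_pos (abs_pos.mpr hj) (hw j)
    exact lt_of_lt_of_le this (hi j (mem_univ j))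
  have hxi : |x i| = t * w i := by
    rw [ht, div_mul_eq_mul_div, mul_div_assoc, div_self (hw i).ne', mul_one]
  have key : |ν| * |x i| ≤ t * (μ * w i) := by
    have h1 : |ν * x i| = |(A *ᵥ x) i| := by rw [hAx]; simp [Pi.smul_apply]
    have h2 : |(A *ᵥ x) i| ≤ ∑ j, A i j * (t * w j) := by
      refine le_trans (Finset.abs_sum_le_sum_abs _ _) (Finset.sum_le_sum fun j _ => ?_)
      rw [abs_mul, abs_of_nonneg (h0 i j)]
      exact mul_le_mul_of_nonneg_left (hbound j) (h0 i j)
    have h3 : ∑ j, A i j * (t * w j) = t * (A *ᵥ w) i := by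
      simp only [mulVec, dotProduct, Finset.mul_sum]
      exact Finset.sum_congr rfl fun j _ => by ring
    have h4 : (A *ᵥ w) i = μ * w i := by rw [hAw]; simp [Pi.smul_apply]
    calc |ν| * |x i| = |ν * x i| := (abs_mul ν (x i)).symm
      _ = |(A *ᵥ x) i| := h1
      _ ≤ ∑ j, A i j * (t * w j) := h2
      _ = t * (μ * w i) := by rw [h3, h4]
  have : |ν| ≤ μ := by
    rw [hxi] at key
    have := mul_pos htpos (hw i)
    nlinarith
  exact le_trans (le_abs_self ν) this

lemma eigMem {n : Type*} [Fintype n] [DecidableEq n] (A : Matrix n n ℝ)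
    (hA : A.IsHermitian) (μ : ℝ) (w : n → ℝ) (hw : w ≠ 0)
    (hAw : A *ᵥ w = μ • w) : ∃ j, hA.eigenvalues j = μ := by
  classical
  by_contra h
  push_neg at h
  set b := hA.eigenvectorBasis with hb
  have hsym : Aᵀ = A := by
    have := hA
    rwa [Matrix.IsHermitian, conjTranspose_eq_transpose_of_trivial] at this
  have key : ∀ j, (⇑(b j) : n → ℝ) ⬝ᵥ w = 0 := by
    intro j
    have h1 : (⇑(b j) : n → ℝ) ⬝ᵥ (A *ᵥ w) = μ * ((⇑(b j) : n → ℝ) ⬝ᵥ w) := by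
      rw [hAw]; simp [dotProduct, Finset.mul_sum]; exact Finset.sum_congr rfl fun i _ => by ring
    have h2 : (⇑(b j) : n → ℝ) ⬝ᵥ (A *ᵥ w) = hA.eigenvalues j * ((⇑(b j) : n → ℝ) ⬝ᵥ w) := by
      rw [dotProduct_mulVec, ← mulVec_transpose, hsym, hA.mulVec_eigenvectorBasis]
      simp [dotProduct, Finset.mul_sum]
      exact Finset.sum_congr rfl fun i _ => by ring
    have := h1.symm.trans h2
    have hne := sub_ne_zero_of_ne (h j)
    have : (hA.eigenvalues j - μ) * ((⇑(b j) : n → ℝ) ⬝ᵥ w) = 0 := by linarith [this]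
    rcases mul_eq_zero.mp this with h' | h'
    · exact absurd h' hne
    · exact h'
  apply hw
  have hrepr : ∀ j, b.repr ((WithLp.equiv 2 (n → ℝ)).symm w) j = 0 := by
    intro j
    rw [OrthonormalBasis.repr_apply_apply]
    simpa [PiLp.inner_apply, dotProduct, RCLike.inner_apply, mul_comm] using key j
  have : b.repr ((WithLp.equiv 2 (n → ℝ)).symm w) = 0 := by
    ext j; exact hrepr j
  have := b.repr.injective (this.trans (map_zero b.repr).symm)
  simpa using congrArg (WithLp.equiv 2 (n → ℝ)) this


/-- The spectral radius of a graph: the largest eigenvalue of its adjacency matrix. -/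
noncomputable def adjSpecRad {V : Type*} [Fintype V] [DecidableEq V] (G : SimpleGraph V) : ℝ :=
  letI := Classical.decRel G.Adj
  ⨆ i, (Matrix.IsHermitian.eigenvalues
    (by
      ext i j
      simp [Matrix.conjTranspose_apply, SimpleGraph.adjMatrix, G.adj_comm i j]
      : (G.adjMatrix ℝ).IsHermitian)) i

/-- `K_1 ∨ r K_3`: vertex `0` joined to `r` disjoint triangles `{1,2,3}, {4,5,6}, …`. -/
def K1JoinTriangles (r : ℕ) : SimpleGraph (Fin (3 * r + 1)) where
  Adj v w := v ≠ w ∧ (v.val = 0 ∨ w.val = 0 ∨ (v.val + 2) / 3 = (w.val + 2) / 3)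
  symm := ⟨by intro v w h; exact ⟨h.1.symm, by tauto⟩⟩
  loopless := ⟨fun v h => h.1 rfl⟩

theorem specRad_K1_join_triangles (r : ℕ) (hr : 1 ≤ r) :
    adjSpecRad (K1JoinTriangles r) = 1 + Real.sqrt ((3 * r + 1 : ℕ) : ℝ) := by
  unfold adjSpecRad
  letI := Classical.decRel (K1JoinTriangles r).Adj
  set A := (K1JoinTriangles r).adjMatrix ℝ with hAdef
  have hA : A.IsHermitian := by
    ext i j
    rw [hAdef]
    simp [Matrix.conjTranspose_apply, SimpleGraph.adjMatrix, (K1JoinTriangles r).adj_comm i j]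
  show (⨆ i, hA.eigenvalues i) = 1 + Real.sqrt ((3 * r + 1 : ℕ) : ℝ)
  set N : ℝ := ((3 * r + 1 : ℕ) : ℝ) with hNdef
  set s : ℝ := Real.sqrt N with hsdef
  have hN4 : (4 : ℝ) ≤ N := by
    rw [hNdef]; push_cast; have : (1:ℝ) ≤ r := by exact_mod_cast hr
    linarith
  have hs2 : s * s = N := Real.mul_self_sqrt (by linarith)
  have hs0 : 0 ≤ s := Real.sqrt_nonneg N
  have hs1 : 1 < s := by nlinarith
  set w : Fin (3 * r + 1) → ℝ := fun v => if v.val = 0 then s - 1 else 1 with hwdef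
  have hwpos : ∀ v, 0 < w v := by
    intro v; rw [hwdef]; dsimp only; split <;> linarith
  have hwne : w ≠ 0 := by
    intro h
    have := congrFun h ⟨0, by omega⟩
    rw [hwdef] at this; simp at this; linarith
  have hnn : ∀ i j, 0 ≤ A i j := by
    intro i j; rw [hAdef, SimpleGraph.adjMatrix_apply]; split <;> norm_num
  -- the main eigenvector equation
  have hAw : A *ᵥ w = (1 + s) • w := by
    funext v
    rw [hAdef, SimpleGraph.adjMatrix_mulVec_apply, neighborFinset_eq_filter, Finset.sum_filter]
    set f : ℕ → ℝ := fun u =>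
      if (¬ u = v.val ∧ (v.val = 0 ∨ u = 0 ∨ (v.val + 2) / 3 = (u + 2) / 3)) then
        (if u = 0 then s - 1 else 1) else 0 with hfdef
    have hpt : ∀ u : Fin (3 * r + 1),
        (if (K1JoinTriangles r).Adj v u then w u else 0) = f u.val := by
      intro u
      rw [hfdef]; dsimp only
      by_cases hadj : (K1JoinTriangles r).Adj v u
      · rw [if_pos hadj, if_pos, hwdef]
        obtain ⟨h1, h2⟩ := hadj
        refine ⟨fun he => h1 (Fin.ext he.symm), h2⟩
      · rw [if_neg hadj, if_neg]
        intro ⟨h1, h2⟩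
        exact hadj ⟨fun he => h1 (congrArg Fin.val he).symm, h2⟩
    rw [Finset.sum_congr rfl (fun u _ => hpt u), Fin.sum_univ_eq_sum_range f (3 * r + 1)]
    by_cases hv : v.val = 0
    · -- center vertex
      have hf0 : f 0 = 0 := by rw [hfdef]; simp [hv]
      have hsum : ∑ u ∈ Finset.range (3 * r + 1), f u
          = ∑ u ∈ (Finset.range (3 * r + 1)).erase 0, f u := by
        rw [← Finset.sum_erase_add _ f (show (0:ℕ) ∈ Finset.range (3*r+1) from Finset.mem_range.mpr (by omega)), hf0, add_zero]
      have hone : ∀ u ∈ (Finset.range (3 * r + 1)).erase 0, f u = 1 := by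
        intro u hu
        rw [Finset.mem_erase] at hu
        rw [hfdef]; dsimp only
        rw [if_pos ⟨by omega, Or.inl hv⟩, if_neg hu.1]
      rw [hsum, Finset.sum_congr rfl hone, Finset.sum_const, Finset.card_erase_of_mem
        (Finset.mem_range.mpr (by omega)), Finset.card_range]
      have hwv : w v = s - 1 := by rw [hwdef]; simp [hv]
      rw [Pi.smul_apply, hwv, smul_eq_mul]
      have : ((3 * r + 1 - 1 : ℕ) : ℝ) = N - 1 := by
        rw [hNdef]; push_cast [Nat.add_sub_cancel]; ring
      rw [nsmul_eq_mul, this]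
      nlinarith
    · -- triangle vertex
      set t := (v.val + 2) / 3 with htt
      have hvlt : v.val < 3 * r + 1 := v.isLt
      have hfilter : (Finset.range (3 * r + 1)).filter
          (fun u => ¬ u = v.val ∧ (v.val = 0 ∨ u = 0 ∨ (v.val + 2) / 3 = (u + 2) / 3))
          = ({0, 3*t-2, 3*t-1, 3*t} : Finset ℕ).erase v.val := by
        ext u
        simp only [Finset.mem_filter, Finset.mem_range, Finset.mem_erase, Finset.mem_insert,
          Finset.mem_singleton]
        omega
      have hform : ∑ u ∈ Finset.range (3 * r + 1), f u
          = ∑ u ∈ (Finset.range (3 * r + 1)).filter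
            (fun u => ¬ u = v.val ∧ (v.val = 0 ∨ u = 0 ∨ (v.val + 2) / 3 = (u + 2) / 3)),
            (if u = 0 then s - 1 else 1) := by
        rw [Finset.sum_filter]
      have hvmem : v.val ∈ ({0, 3*t-2, 3*t-1, 3*t} : Finset ℕ) := by
        simp only [Finset.mem_insert, Finset.mem_singleton]; omega
      have hbig : ∑ u ∈ ({0, 3*t-2, 3*t-1, 3*t} : Finset ℕ), (if u = 0 then s - 1 else 1)
          = s + 2 := by
        rw [show ({0, 3*t-2, 3*t-1, 3*t} : Finset ℕ)
            = insert 0 (insert (3*t-2) (insert (3*t-1) {3*t})) from rfl]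
        rw [Finset.sum_insert (by simp; omega), Finset.sum_insert (by simp; omega),
          Finset.sum_insert (by simp; omega), Finset.sum_singleton]
        rw [if_pos rfl, if_neg (by omega), if_neg (by omega), if_neg (by omega)]
        ring
      rw [hform, hfilter, Finset.sum_erase_eq_sub hvmem, hbig, if_neg hv]
      have hwv : w v = 1 := by rw [hwdef]; simp [hv]
      rw [Pi.smul_apply, hwv, smul_eq_mul]
      ring
  apply le_antisymm
  · apply ciSup_le
    intro i
    refine perronUpper A hnn (1 + s) _ w (⇑(hA.eigenvectorBasis i)) hwpos hAw ?_
      (hA.mulVec_eigenvectorBasis i)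
    intro hzero
    have hb0 : hA.eigenvectorBasis i = 0 := by
      ext j; exact congrFun hzero j
    have := hA.eigenvectorBasis.orthonormal.1 i
    rw [hb0] at this
    simp at this
  · obtain ⟨j, hj⟩ := eigMem A hA (1 + s) w hwne hAw
    have : 1 + s = hA.eigenvalues j := hj.symm
    rw [this]
    exact le_ciSup (Set.Finite.bddAbove (Set.finite_range _)) j

end helpers
end

section
/- For n ≥ 9 with n ≡ 0 (mod 3), the spectral radius of K_1 ∨ (K_2 ∪ ((n-3)/3)K_3) is strictly less than sqrt(3(n-3)). -/
open SimpleGraph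

/-- `K_1 ∨ (K_2 ∪ k K_3)` on `Fin n` (for `n ≡ 0 mod 3`): vertex `0` joined to the
edge `{1,2}` and the disjoint triangles `{3,4,5}, {6,7,8}, …`. -/
def K1JoinK2Triangles (n : ℕ) : SimpleGraph (Fin n) where
  Adj v w := v ≠ w ∧ (v.val = 0 ∨ w.val = 0 ∨ v.val / 3 = w.val / 3)
  symm := ⟨by intro v w h; exact ⟨h.1.symm, by tauto⟩⟩
  loopless := ⟨fun v h => h.1 rfl⟩


open Matrix Finset


noncomputable def xw (t : ℝ) (m : ℕ) : ℝ :=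
  if m = 0 then t - 2 else if m ≤ 2 then (t - 2) / (t - 1) else 1

noncomputable def Fw (t : ℝ) (a m : ℕ) : ℝ :=
  (if (a ≠ m ∧ (a = 0 ∨ m = 0 ∨ a / 3 = m / 3)) then 1 else 0) * xw t m

lemma xw_ge3 (t : ℝ) {m : ℕ} (hm : 3 ≤ m) : xw t m = 1 := by
  unfold xw; rw [if_neg (by omega), if_neg (by omega)]

lemma sum0 (t : ℝ) {n : ℕ} (hn : 9 ≤ n) :
    ∑ m ∈ range n, Fw t 0 m = 2 * ((t - 2) / (t - 1)) + ((n : ℝ) - 3) := by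
  have hF : ∀ m, Fw t 0 m = if m = 0 then 0 else xw t m := by
    intro m
    unfold Fw
    by_cases hm : m = 0
    · subst hm; norm_num
    · rw [if_pos ⟨by omega, Or.inl rfl⟩, if_neg hm, one_mul]
  simp only [hF]
  rw [range_eq_Ico, ← Finset.sum_Ico_consecutive _ (by omega : 0 ≤ 3) (by omega : 3 ≤ n)]
  have h1 : ∑ m ∈ Finset.Ico 3 n, (if m = 0 then (0:ℝ) else xw t m) = (n : ℝ) - 3 := by
    have hc : ∀ m ∈ Finset.Ico 3 n, (if m = 0 then (0:ℝ) else xw t m) = 1 := by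
      intro m hm
      have h3m := (Finset.mem_Ico.mp hm).1
      rw [if_neg (by omega), xw_ge3 t h3m]
    rw [Finset.sum_congr rfl hc, Finset.sum_const, Nat.card_Ico, nsmul_eq_mul, mul_one,
      Nat.cast_sub (by omega : 3 ≤ n)]
    norm_num
  have h2 : ∑ m ∈ Finset.Ico 0 3, (if m = 0 then (0:ℝ) else xw t m)
      = 2 * ((t - 2) / (t - 1)) := by
    rw [← range_eq_Ico]
    rw [Finset.sum_range_succ, Finset.sum_range_succ, Finset.sum_range_succ,
      Finset.sum_range_zero]
    norm_num [xw]
    ring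
  rw [h1, h2]

lemma sum12 (t : ℝ) {a n : ℕ} (ha : a = 1 ∨ a = 2) (hn : 9 ≤ n) :
    ∑ m ∈ range n, Fw t a m = (t - 2) + (t - 2) / (t - 1) := by
  rw [show range n = range 3 ∪ Finset.Ico 3 n by
    rw [range_eq_Ico, range_eq_Ico, Finset.Ico_union_Ico_eq_Ico (by omega) (by omega)]]
  rw [Finset.sum_union (by
    simp [Finset.disjoint_left, Finset.mem_Ico]
    intro x hx; omega)]
  have h1 : ∑ m ∈ Finset.Ico 3 n, Fw t a m = 0 := by
    apply Finset.sum_eq_zero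
    intro m hm
    have hm3 := (Finset.mem_Ico.mp hm).1
    have : ¬(a ≠ m ∧ (a = 0 ∨ m = 0 ∨ a / 3 = m / 3)) := by omega
    simp [Fw, this]
  rw [h1, Finset.sum_range_succ, Finset.sum_range_succ, Finset.sum_range_succ,
    Finset.sum_range_zero]
  rcases ha with h | h <;> subst h <;> norm_num [Fw, xw]

lemma sum3 (t : ℝ) {a n : ℕ} (h3 : n % 3 = 0) (ha : 3 ≤ a) (han : a < n) :
    ∑ m ∈ range n, Fw t a m = (t - 2) + 2 := by
  set q := a / 3 with hq
  have hq1 : 1 ≤ q := by omega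
  have hqn : 3 * q + 3 ≤ n := by omega
  have haq : 3 * q ≤ a ∧ a < 3 * q + 3 := by omega
  have hF : ∀ m, Fw t a m = (if m = 0 then t - 2 else 0)
      + (if m ∈ Finset.Ico (3 * q) (3 * q + 3) then (if m = a then 0 else 1) else 0) := by
    intro m
    by_cases hm0 : m = 0
    · subst hm0
      have hcond : (a ≠ 0 ∧ (a = 0 ∨ 0 = 0 ∨ a / 3 = 0 / 3)) := by omega
      rw [Fw, if_pos hcond, if_pos rfl,
        if_neg (by simp [Finset.mem_Ico]; omega)]
      simp [xw]
    · by_cases hmq : 3 * q ≤ m ∧ m < 3 * q + 3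
      · have hx1 : xw t m = 1 := xw_ge3 t (by omega)
        rw [if_neg hm0, if_pos (Finset.mem_Ico.mpr hmq), Fw, hx1]
        by_cases hma : m = a
        · rw [if_pos hma, if_neg (by omega)]; ring
        · rw [if_neg hma, if_pos (by omega)]; ring
      · rw [if_neg hm0, if_neg (by simp [Finset.mem_Ico]; omega), Fw,
          if_neg (by omega)]
        ring
  simp only [hF]
  rw [Finset.sum_add_distrib]
  have h1 : ∑ m ∈ range n, (if m = 0 then t - 2 else 0) = t - 2 := by
    rw [Finset.sum_ite_eq' (range n) 0 (fun _ => t - 2), if_pos (by simp; omega)]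
  have h2 : ∑ m ∈ range n, (if m ∈ Finset.Ico (3 * q) (3 * q + 3)
      then (if m = a then (0:ℝ) else 1) else 0) = 2 := by
    rw [Finset.sum_ite_mem, Finset.inter_eq_right.mpr (by
      intro m hm
      simp only [Finset.mem_Ico] at hm
      simp only [Finset.mem_range]
      omega)]
    have : Finset.Ico (3 * q) (3 * q + 3) = {3 * q, 3 * q + 1, 3 * q + 2} := by
      rw [show 3 * q + 3 = (3 * q) + 3 from rfl]
      ext m; simp [Finset.mem_Ico]; omega
    rw [this]
    rw [Finset.sum_insert (by simp only [Finset.mem_insert, Finset.mem_singleton]; omega),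
      Finset.sum_insert (by simp only [Finset.mem_singleton]; omega), Finset.sum_singleton]
    rcases (by omega : a = 3 * q ∨ a = 3 * q + 1 ∨ a = 3 * q + 2) with h | h | h
    · rw [if_pos h.symm, if_neg (by omega), if_neg (by omega)]; ring
    · rw [if_neg (by omega), if_pos h.symm, if_neg (by omega)]; ring
    · rw [if_neg (by omega), if_neg (by omega), if_pos h.symm]; ring
  rw [h1, h2]
lemma eig_le_of_mulVec_le {n : ℕ} [NeZero n] (A : Matrix (Fin n) (Fin n) ℝ)
    (hA : A.IsHermitian) (hpos : ∀ i j, 0 ≤ A i j)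
    (x : Fin n → ℝ) (hx : ∀ i, 0 < x i) (t : ℝ)
    (hAx : ∀ i, (A *ᵥ x) i ≤ t * x i) (k : Fin n) : hA.eigenvalues k ≤ t := by
  set v : Fin n → ℝ := fun j => hA.eigenvectorBasis k j with hv
  have hev : A *ᵥ v = hA.eigenvalues k • v := hA.mulVec_eigenvectorBasis k
  have hvne : v ≠ 0 := by
    have := hA.eigenvectorBasis.orthonormal.ne_zero k
    intro h
    apply this
    ext j
    exact congrFun h j
  -- pick i maximizing |v i| / x i
  obtain ⟨i, -, hi⟩ := Finset.exists_max_image Finset.univ (fun j => |v j| / x j)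
    ⟨k, Finset.mem_univ k⟩
  have hine : v i ≠ 0 := by
    intro h0
    apply hvne
    funext j
    have := hi j (Finset.mem_univ j)
    rw [h0] at this
    simp only [abs_zero, zero_div] at this
    have h1 : |v j| / x j ≤ 0 := this
    have h2 : 0 ≤ |v j| / x j := div_nonneg (abs_nonneg _) (hx j).le
    have : |v j| = 0 := by
      have := le_antisymm h1 h2
      rw [div_eq_zero_iff] at this
      rcases this with h | h
      · simp [h]
      · exact absurd h (hx j).ne'
    simpa using this
  have key : |hA.eigenvalues k| * |v i| ≤ t * |v i| := by
    have h1 : hA.eigenvalues k * v i = ∑ j, A i j * v j := by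
      have := congrFun hev i
      simp [Matrix.mulVec, dotProduct, Pi.smul_apply, smul_eq_mul] at this
      linarith [this]
    have h2 : |hA.eigenvalues k| * |v i| = |∑ j, A i j * v j| := by
      rw [← abs_mul, h1]
    rw [h2]
    calc |∑ j, A i j * v j| ≤ ∑ j, |A i j * v j| := Finset.abs_sum_le_sum_abs _ _
      _ ≤ ∑ j, A i j * (x j * (|v i| / x i)) := by
          apply Finset.sum_le_sum
          intro j _
          rw [abs_mul, abs_of_nonneg (hpos i j)]
          apply mul_le_mul_of_nonneg_left _ (hpos i j)
          have := hi j (Finset.mem_univ j)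
          calc |v j| = (|v j| / x j) * x j := (div_mul_cancel₀ _ (hx j).ne').symm
            _ ≤ (|v i| / x i) * x j := by
                apply mul_le_mul_of_nonneg_right this (hx j).le
            _ = x j * (|v i| / x i) := by ring
      _ = (A *ᵥ x) i * (|v i| / x i) := by
          simp [Matrix.mulVec, dotProduct, Finset.sum_mul, mul_assoc]
      _ ≤ t * x i * (|v i| / x i) := by
          apply mul_le_mul_of_nonneg_right (hAx i)
          exact div_nonneg (abs_nonneg _) (hx i).le
      _ = t * |v i| := by
          have hxi : x i ≠ 0 := (hx i).ne'
          field_simp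
  have habs : |hA.eigenvalues k| ≤ t :=
    le_of_mul_le_mul_right (by simpa [mul_comm] using key) (abs_pos.mpr hine)
  exact (abs_le.mp habs).2

theorem specRad_K1_join_K2_triangles_lt (n : ℕ) (hn : 9 ≤ n) (h3 : n % 3 = 0) :
    adjSpecRad (K1JoinK2Triangles n) < Real.sqrt (3 * ((n : ℝ) - 3)) := by
  haveI : NeZero n := ⟨by omega⟩
  letI : DecidableRel (K1JoinK2Triangles n).Adj := Classical.decRel _
  set t : ℝ := Real.sqrt (2 * (n : ℝ) - 1) with ht
  have hn9 : (9 : ℝ) ≤ (n : ℝ) := by exact_mod_cast hn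
  have h2n : (0 : ℝ) ≤ 2 * (n : ℝ) - 1 := by linarith
  have ht2 : t ^ 2 = 2 * (n : ℝ) - 1 := Real.sq_sqrt h2n
  have ht0 : 0 ≤ t := Real.sqrt_nonneg _
  have ht4 : 4 < t := by nlinarith
  have htn : 2 * t ≤ (n : ℝ) := by
    have h1 : 2 * (n : ℝ) - 1 ≤ ((n : ℝ) / 2) ^ 2 := by nlinarith
    have h2 : t ≤ (n : ℝ) / 2 := by
      calc t ≤ Real.sqrt (((n : ℝ) / 2) ^ 2) := Real.sqrt_le_sqrt h1
        _ = (n : ℝ) / 2 := Real.sqrt_sq (by linarith)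
    linarith
  have ht1ne : t - 1 ≠ 0 := by intro h; linarith [h]
  have hb1 : (t - 2) / (t - 1) ≤ 1 := by
    rw [div_le_one (by linarith)]; linarith
  have hb0 : 0 < (t - 2) / (t - 1) := div_pos (by linarith) (by linarith)
  set x : Fin n → ℝ := fun j => xw t j.val with hxdef
  have hxpos : ∀ i, 0 < x i := by
    intro i
    simp only [hxdef, xw]
    split_ifs
    · linarith
    · exact hb0
    · norm_num
  have hsummand : ∀ (i j : Fin n),
      (if (K1JoinK2Triangles n).Adj i j then (1 : ℝ) else 0) * x j = Fw t i.val j.val := by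
    intro i j
    have hiff : (K1JoinK2Triangles n).Adj i j ↔
        (i.val ≠ j.val ∧ (i.val = 0 ∨ j.val = 0 ∨ i.val / 3 = j.val / 3)) := by
      constructor
      · rintro (⟨h1, h2⟩ : i ≠ j ∧ _)
        exact ⟨fun h => h1 (Fin.val_injective h), h2⟩
      · rintro ⟨h1, h2⟩
        exact (⟨fun h => h1 (congrArg Fin.val h), h2⟩ : i ≠ j ∧ _)
    by_cases hc : (i.val ≠ j.val ∧ (i.val = 0 ∨ j.val = 0 ∨ i.val / 3 = j.val / 3))
    · rw [Fw, if_pos hc, if_pos (hiff.mpr hc)]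
    · rw [Fw, if_neg hc, if_neg (fun h => hc (hiff.mp h))]
  have hmv : ∀ (i : Fin n),
      ((K1JoinK2Triangles n).adjMatrix ℝ *ᵥ x) i = ∑ m ∈ Finset.range n, Fw t i.val m := by
    intro i
    have h1 : ((K1JoinK2Triangles n).adjMatrix ℝ *ᵥ x) i
        = ∑ j : Fin n, (if (K1JoinK2Triangles n).Adj i j then (1 : ℝ) else 0) * x j := by
      simp [Matrix.mulVec, dotProduct, SimpleGraph.adjMatrix_apply]
    rw [h1, Finset.sum_congr rfl (fun j _ => hsummand i j)]
    exact Fin.sum_univ_eq_sum_range (fun m => Fw t i.val m) n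
  have hAx : ∀ (i : Fin n), ((K1JoinK2Triangles n).adjMatrix ℝ *ᵥ x) i ≤ t * x i := by
    intro i
    rw [hmv i]
    by_cases h0 : i.val = 0
    · have hxi : x i = t - 2 := by simp only [hxdef, xw, h0, ↓reduceIte]
      rw [hxi]
      simp only [h0]
      rw [sum0 t hn]
      nlinarith
    · by_cases h2 : i.val ≤ 2
      · have ha : i.val = 1 ∨ i.val = 2 := by omega
        have hxi : x i = (t - 2) / (t - 1) := by
          simp only [hxdef, xw]
          rw [if_neg h0, if_pos h2]
        rw [hxi, sum12 t ha hn]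
        have key : t * ((t - 2) / (t - 1)) - (t - 2) / (t - 1) = t - 2 := by
          field_simp
        linarith
      · have ha3 : 3 ≤ i.val := by omega
        have hxi : x i = 1 := by
          simp only [hxdef]
          exact xw_ge3 t ha3
        rw [hxi, sum3 t h3 ha3 i.isLt]
        linarith
  have hpos : ∀ (i j : Fin n),
      (0 : ℝ) ≤ (K1JoinK2Triangles n).adjMatrix ℝ i j := by
    intro i j
    simp only [SimpleGraph.adjMatrix_apply]
    split_ifs <;> norm_num
  have hlt : t < Real.sqrt (3 * ((n : ℝ) - 3)) :=
    Real.sqrt_lt_sqrt h2n (by linarith)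
  refine lt_of_le_of_lt ?_ hlt
  unfold adjSpecRad
  exact ciSup_le fun k => eig_le_of_mulVec_le _ _ hpos x hxpos t hAx k
end

section
/- For n ≥ 8 with n ≡ 2 (mod 3), the spectral radius of K_1 ∨ (K_1 ∪ ((n-2)/3)K_3) is strictly less than sqrt(3(n-3)). -/
open SimpleGraph Matrix

lemma eig_le_of_rowsum {m : Type*} [Fintype m] [DecidableEq m] [Nonempty m]
    {A : Matrix m m ℝ} (hA : A.IsHermitian) (h0 : ∀ i j, 0 ≤ A i j)
    {y : m → ℝ} (hy : ∀ i, 0 < y i) {t : ℝ}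
    (ht : ∀ i, ∑ j, A i j * y j ≤ t * y i) (i : m) :
    hA.eigenvalues i ≤ t := by
  set lam := hA.eigenvalues i with hlam
  set x : m → ℝ := ⇑(hA.eigenvectorBasis i) with hxdef
  have hx : A *ᵥ x = lam • x := hA.mulVec_eigenvectorBasis i
  have hxne : x ≠ 0 := by
    intro h
    apply hA.eigenvectorBasis.orthonormal.ne_zero i
    ext j
    exact congrFun h j
  obtain ⟨i₀, hi₀⟩ := Finite.exists_max (fun j => |x j| / y j)
  have hxi₀ : 0 < |x i₀| := by
    by_contra hcon
    push_neg at hcon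
    have hx0 : |x i₀| = 0 := le_antisymm hcon (abs_nonneg _)
    apply hxne
    funext j
    have hj0 := hi₀ j
    rw [hx0, zero_div] at hj0
    have hj : |x j| ≤ 0 := by
      rcases div_nonpos_iff.1 hj0 with ⟨_, h2⟩ | ⟨h1, _⟩
      · exact absurd (hy j) (not_lt.2 h2)
      · exact h1
    simpa using le_antisymm hj (abs_nonneg _)
  have key : lam * |x i₀| ≤ t * |x i₀| := by
    have h1 : lam * |x i₀| ≤ |lam * x i₀| := by
      rw [abs_mul]
      exact mul_le_mul_of_nonneg_right (le_abs_self lam) (abs_nonneg _)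
    have h2 : lam * x i₀ = ∑ j, A i₀ j * x j := by
      have h := congrFun hx i₀
      simp only [Matrix.mulVec, dotProduct, Pi.smul_apply, smul_eq_mul] at h
      exact h.symm
    have h3 : |∑ j, A i₀ j * x j| ≤ ∑ j, A i₀ j * |x j| := by
      refine (Finset.abs_sum_le_sum_abs _ _).trans ?_
      apply Finset.sum_le_sum
      intro j _
      rw [abs_mul, abs_of_nonneg (h0 i₀ j)]
    have h4 : ∀ j, |x j| ≤ (|x i₀| / y i₀) * y j := by
      intro j
      have := hi₀ j
      calc |x j| = (|x j| / y j) * y j := (div_mul_cancel₀ _ (ne_of_gt (hy j))).symm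
        _ ≤ (|x i₀| / y i₀) * y j := by
            apply mul_le_mul_of_nonneg_right this (le_of_lt (hy j))
    have h5 : ∑ j, A i₀ j * |x j| ≤ (|x i₀| / y i₀) * ∑ j, A i₀ j * y j := by
      rw [Finset.mul_sum]
      apply Finset.sum_le_sum
      intro j _
      calc A i₀ j * |x j| ≤ A i₀ j * ((|x i₀| / y i₀) * y j) :=
            mul_le_mul_of_nonneg_left (h4 j) (h0 i₀ j)
        _ = |x i₀| / y i₀ * (A i₀ j * y j) := by ring
    have h6 : (|x i₀| / y i₀) * ∑ j, A i₀ j * y j ≤ (|x i₀| / y i₀) * (t * y i₀) :=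
      mul_le_mul_of_nonneg_left (ht i₀) (div_nonneg (abs_nonneg _) (le_of_lt (hy i₀)))
    have h7 : (|x i₀| / y i₀) * (t * y i₀) = t * |x i₀| := by
      have hc : |x i₀| / y i₀ * y i₀ = |x i₀| := div_mul_cancel₀ _ (ne_of_gt (hy i₀))
      calc (|x i₀| / y i₀) * (t * y i₀) = t * (|x i₀| / y i₀ * y i₀) := by ring
        _ = t * |x i₀| := by rw [hc]
    calc lam * |x i₀| ≤ |lam * x i₀| := h1
      _ = |∑ j, A i₀ j * x j| := by rw [h2]
      _ ≤ ∑ j, A i₀ j * |x j| := h3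
      _ ≤ (|x i₀| / y i₀) * ∑ j, A i₀ j * y j := h5
      _ ≤ (|x i₀| / y i₀) * (t * y i₀) := h6
      _ = t * |x i₀| := h7
  exact le_of_mul_le_mul_right key hxi₀

/-- `K_1 ∨ (K_1 ∪ k K_3)` on `Fin n` (for `n ≡ 2 mod 3`): vertex `0` joined to the
single vertex `1` and the disjoint triangles `{2,3,4}, {5,6,7}, …`. -/
def K1JoinK1Triangles (n : ℕ) : SimpleGraph (Fin n) where
  Adj v w := v ≠ w ∧ (v.val = 0 ∨ w.val = 0 ∨ (v.val + 1) / 3 = (w.val + 1) / 3)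
  symm := ⟨by intro v w h; exact ⟨h.1.symm, by tauto⟩⟩
  loopless := ⟨fun v h => h.1 rfl⟩

theorem specRad_K1_join_K1_triangles_lt (n : ℕ) (hn : 8 ≤ n) (h3 : n % 3 = 2) :
    adjSpecRad (K1JoinK1Triangles n) < Real.sqrt (3 * ((n : ℝ) - 3)) := by
  classical
  have hn0 : 0 < n := by omega
  haveI : Nonempty (Fin n) := ⟨⟨0, hn0⟩⟩
  have hnR : (8:ℝ) ≤ n := by exact_mod_cast hn
  set s := Real.sqrt (n : ℝ) with hsdef
  have hs2 : s ^ 2 = n := Real.sq_sqrt (by positivity)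
  have hs0 : 0 ≤ s := Real.sqrt_nonneg _
  have hs1 : 1 < s := by nlinarith
  set G := K1JoinK1Triangles n with hG
  set y : Fin n → ℝ := fun v => if v.val = 0 then s - 1 else 1 with hy
  have hypos : ∀ i, 0 < y i := by
    intro i
    by_cases h : i.val = 0 <;> simp [hy, h] <;> linarith
  set t : ℝ := 1 + s with htdef
  letI := Classical.decRel G.Adj
  set A := G.adjMatrix ℝ with hA
  have hApos : ∀ i j, 0 ≤ A i j := by
    intro i j
    rw [hA, SimpleGraph.adjMatrix_apply]
    split <;> norm_num
  have hAle : ∀ i j, A i j ≤ 1 := by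
    intro i j
    rw [hA, SimpleGraph.adjMatrix_apply]
    split <;> norm_num
  set z : Fin n := ⟨0, hn0⟩ with hz
  have hvalz : ∀ j : Fin n, j.val = 0 → j = z := by
    intro j hj; apply Fin.ext; simpa [hz] using hj
  have ht : ∀ i, ∑ j, A i j * y j ≤ t * y i := by
    intro i
    by_cases hi : i.val = 0
    · -- row of the dominating vertex
      have hstep : ∀ j : Fin n, A i j * y j = if j = i then 0 else 1 := by
        intro j
        by_cases hji : j = i
        · simp [hji, hA, SimpleGraph.adjMatrix_apply, G.irrefl]
        · have hadj : G.Adj i j := by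
            exact (⟨fun h => hji h.symm, Or.inl hi⟩ : i ≠ j ∧ (i.val = 0 ∨ j.val = 0 ∨ (i.val + 1) / 3 = (j.val + 1) / 3))
          have hjv : j.val ≠ 0 := by
            intro h
            exact hji (Fin.ext (by rw [h, hi]))
          simp [hA, SimpleGraph.adjMatrix_apply, hadj, hy, hjv, hji]
      have hsum : ∑ j, A i j * y j = (n : ℝ) - 1 := by
        rw [Finset.sum_congr rfl (fun j _ => hstep j)]
        have he : ∑ j : Fin n, (if j = i then (0:ℝ) else 1)
            = ∑ j : Fin n, ((1:ℝ) - if j = i then 1 else 0) := by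
          refine Finset.sum_congr rfl fun j _ => by split <;> ring
        rw [he, Finset.sum_sub_distrib]
        simp [Finset.sum_ite_eq', Finset.card_univ]
      rw [hsum]
      have hyi : y i = s - 1 := if_pos hi
      rw [hyi]
      nlinarith
    · -- other rows
      have hyi : y i = 1 := if_neg hi
      set T : Finset (Fin n) :=
        Finset.univ.filter (fun j : Fin n => j.val ≠ 0 ∧ (i.val + 1) / 3 = (j.val + 1) / 3)
        with hT
      have hiT : i ∈ T := by simp [hT, hi]
      have hinj : Set.InjOn (fun j : Fin n => (j.val + 1) % 3) ↑T := by
        intro a ha b hb hab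
        simp only [hT, Finset.mem_coe, Finset.mem_filter] at ha hb
        have hda := ha.2.2
        have hdb := hb.2.2
        have h1 := Nat.div_add_mod (a.val + 1) 3
        have h2 := Nat.div_add_mod (b.val + 1) 3
        simp only at hab
        exact Fin.ext (by omega)
      have hcardT : T.card ≤ 3 := by
        have hle := Finset.card_le_card_of_injOn (fun j : Fin n => (j.val + 1) % 3)
          (fun a _ => Finset.mem_range.2 (Nat.mod_lt _ (by norm_num))) hinj
        simpa using hle
      have hcard : (T.erase i).card ≤ 2 := by
        rw [Finset.card_erase_of_mem hiT]
        omega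
      have hterm : ∀ j ∈ Finset.univ.erase z,
          A i j * y j ≤ (if j ∈ T.erase i then (1:ℝ) else 0) := by
        intro j hj
        have hjz : j ≠ z := (Finset.mem_erase.1 hj).1
        have hjv : j.val ≠ 0 := fun h => hjz (hvalz j h)
        have hyj : y j = 1 := if_neg hjv
        rw [hyj, mul_one]
        by_cases hadj : G.Adj i j
        · have hjT : j ∈ T.erase i := by
            refine Finset.mem_erase.2 ⟨fun h => (hadj : i ≠ j ∧ (i.val = 0 ∨ j.val = 0 ∨ (i.val + 1) / 3 = (j.val + 1) / 3)).1 h.symm, ?_⟩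
            simp only [hT, Finset.mem_filter]
            refine ⟨Finset.mem_univ _, hjv, ?_⟩
            rcases (hadj : i ≠ j ∧ (i.val = 0 ∨ j.val = 0 ∨ (i.val + 1) / 3 = (j.val + 1) / 3)).2 with h | h | h
            · exact absurd h hi
            · exact absurd h hjv
            · exact h
          rw [if_pos hjT]
          exact hAle i j
        · have : A i j = 0 := by simp [hA, SimpleGraph.adjMatrix_apply, hadj]
          rw [this]
          split <;> norm_num
      have hsplit : ∑ j, A i j * y j
          = A i z * y z + ∑ j ∈ Finset.univ.erase z, A i j * y j :=
        (Finset.add_sum_erase _ _ (Finset.mem_univ z)).symm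
      have h1 : A i z * y z ≤ s - 1 := by
        have hyz : y z = s - 1 := if_pos rfl
        rw [hyz]
        calc A i z * (s - 1) ≤ 1 * (s - 1) :=
              mul_le_mul_of_nonneg_right (hAle i z) (by linarith)
          _ = s - 1 := one_mul _
      have h2 : ∑ j ∈ Finset.univ.erase z, A i j * y j ≤ 2 := by
        calc ∑ j ∈ Finset.univ.erase z, A i j * y j
            ≤ ∑ j ∈ Finset.univ.erase z, (if j ∈ T.erase i then (1:ℝ) else 0) :=
              Finset.sum_le_sum hterm
          _ ≤ ∑ j : Fin n, (if j ∈ T.erase i then (1:ℝ) else 0) := by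
              apply Finset.sum_le_sum_of_subset_of_nonneg (Finset.erase_subset _ _)
              intro j _ _
              split <;> norm_num
          _ = (T.erase i).card := by
              rw [Finset.sum_ite_mem]
              simp
          _ ≤ 2 := by exact_mod_cast hcard
      rw [hsplit, hyi, mul_one, htdef]
      linarith
  have hfin : t < Real.sqrt (3 * ((n : ℝ) - 3)) := by
    rw [htdef]
    have hsn : s < (n : ℝ) - 5 := by
      rw [hsdef]
      have h5 : (0:ℝ) < (n : ℝ) - 5 := by linarith
      rw [show ((n:ℝ) - 5) = ((n:ℝ) - 5) from rfl]
      refine (Real.sqrt_lt' h5).2 ?_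
      nlinarith
    refine (Real.lt_sqrt (by linarith)).2 ?_
    nlinarith
  refine lt_of_le_of_lt ?_ hfin
  unfold adjSpecRad
  exact ciSup_le fun i => eig_le_of_rowsum _ hApos hypos ht i
end

section
/- For integers n ≥ 3r + 4 with r ≥ 1, the quartic polynomial f(x) = x^4 - 2x^3 + (6r - 3n + 9)x^2 + (6n - 18r - 18)x + 6nr - 18r - 18r^2 satisfies f(sqrt(3(n-3))) = 6r(4n - 12 - 3r - 3·sqrt(3n-9)) > 0. -/
theorem quartic_at_sqrt (n r : ℕ) (hr : 1 ≤ r) (hn : 3 * r + 4 ≤ n) :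
    (Real.sqrt (3 * ((n : ℝ) - 3))) ^ 4 - 2 * (Real.sqrt (3 * ((n : ℝ) - 3))) ^ 3
        + (6 * r - 3 * (n : ℝ) + 9) * (Real.sqrt (3 * ((n : ℝ) - 3))) ^ 2
        + (6 * (n : ℝ) - 18 * r - 18) * Real.sqrt (3 * ((n : ℝ) - 3))
        + 6 * n * r - 18 * r - 18 * r ^ 2
      = 6 * r * (4 * (n : ℝ) - 12 - 3 * r - 3 * Real.sqrt (3 * (n : ℝ) - 9)) ∧
    0 < 6 * (r : ℝ) * (4 * (n : ℝ) - 12 - 3 * r - 3 * Real.sqrt (3 * (n : ℝ) - 9)) := by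
  have hr' : (1 : ℝ) ≤ r := by exact_mod_cast hr
  have hn' : 3 * (r : ℝ) + 4 ≤ n := by exact_mod_cast hn
  have hn7 : (7 : ℝ) ≤ n := by linarith
  rw [show (3 * (n : ℝ) - 9) = 3 * ((n : ℝ) - 3) by ring]
  set s := Real.sqrt (3 * ((n : ℝ) - 3)) with hs
  have hs0 : 0 ≤ s := Real.sqrt_nonneg _
  have hs2 : s ^ 2 = 3 * ((n : ℝ) - 3) := Real.sq_sqrt (by linarith)
  have hshalf : s ≤ (n : ℝ) / 2 := by nlinarith [sq_nonneg (s - 3)]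
  constructor
  · linear_combination (s ^ 2 + 3 * ((n : ℝ) - 3) - 2 * s + (6 * r - 3 * (n : ℝ) + 9)) * hs2
  · have : 0 < 4 * (n : ℝ) - 12 - 3 * r - 3 * s := by nlinarith
    have hr0 : (0 : ℝ) < r := by linarith
    positivity
end

section
/- Suppose G is a connected graph with Perron vector x (the positive unit eigenvector for the spectral radius), and u, v, w are vertices with uw not an edge, vw an edge, and x_u ≥ x_v. Then the graph G - vw + uw (obtained by deleting edge vw and adding edge uw) has spectral radius strictly larger than that of G. -/
open SimpleGraph

section aux
open Matrix
variable {n : Type*} [Fintype n] [DecidableEq n] {A : Matrix n n ℝ} (hA : A.IsHermitian)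

lemma aux_quad (x : n → ℝ) :
    x ⬝ᵥ A.mulVec x = ∑ i, hA.eigenvalues i * ((star (hA.eigenvectorUnitary : Matrix n n ℝ)) *ᵥ x) i ^ 2 := by
  set U := (hA.eigenvectorUnitary : Matrix n n ℝ) with hU
  set c := (star U) *ᵥ x with hc
  have hsU : star U = Uᵀ := by ext i j; simp [conjTranspose_apply]
  conv_lhs => rw [hA.spectral_theorem, Unitary.conjStarAlgAut_apply]
  rw [← mulVec_mulVec, ← mulVec_mulVec, dotProduct_mulVec]
  have hxU : x ᵥ* U = c := by
    rw [hc, hsU, ← transpose_transpose U, vecMul_transpose, transpose_transpose]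
  rw [hxU, ← hc]
  simp [dotProduct, mulVec_diagonal]
  exact Finset.sum_congr rfl fun i _ => by ring

lemma aux_norm (x : n → ℝ) :
    x ⬝ᵥ x = ∑ i, ((star (hA.eigenvectorUnitary : Matrix n n ℝ)) *ᵥ x) i ^ 2 := by
  set U := (hA.eigenvectorUnitary : Matrix n n ℝ) with hU
  set c := (star U) *ᵥ x with hc
  have hsU : star U = Uᵀ := by ext i j; simp [conjTranspose_apply]
  have hUc : U *ᵥ c = x := by
    rw [hc, mulVec_mulVec, (Matrix.mem_unitaryGroup_iff).mp hA.eigenvectorUnitary.2, one_mulVec]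
  calc x ⬝ᵥ x = x ⬝ᵥ (U *ᵥ c) := by rw [hUc]
    _ = (x ᵥ* U) ⬝ᵥ c := dotProduct_mulVec x U c
    _ = c ⬝ᵥ c := by
        have hxU : x ᵥ* U = c := by
          rw [hc, hsU, ← transpose_transpose U, vecMul_transpose, transpose_transpose]
        rw [hxU]
    _ = ∑ i, c i ^ 2 := by simp [dotProduct, sq]

lemma aux_rayleigh_le (ρ : ℝ) (hρ : ∀ i, hA.eigenvalues i ≤ ρ) (x : n → ℝ) :
    x ⬝ᵥ A.mulVec x ≤ ρ * (x ⬝ᵥ x) := by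
  rw [aux_quad hA x, aux_norm hA x, Finset.mul_sum]
  exact Finset.sum_le_sum fun i _ => mul_le_mul_of_nonneg_right (hρ i) (sq_nonneg _)

lemma aux_rayleigh_eq (ρ : ℝ) (hρ : ∀ i, hA.eigenvalues i ≤ ρ) (x : n → ℝ)
    (h : x ⬝ᵥ A.mulVec x = ρ * (x ⬝ᵥ x)) : A.mulVec x = ρ • x := by
  set U := (hA.eigenvectorUnitary : Matrix n n ℝ) with hU
  set c := (star U) *ᵥ x with hc
  have hUc : U *ᵥ c = x := by
    rw [hc, mulVec_mulVec, (Matrix.mem_unitaryGroup_iff).mp hA.eigenvectorUnitary.2, one_mulVec]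
  have hsum : ∑ i, (ρ - hA.eigenvalues i) * c i ^ 2 = 0 := by
    have h1 := aux_quad hA x
    have h2 := aux_norm hA x
    rw [h1, h2, Finset.mul_sum] at h
    simp only [sub_mul]
    rw [Finset.sum_sub_distrib, sub_eq_zero]
    exact h.symm
  have hterm : ∀ i ∈ Finset.univ, (ρ - hA.eigenvalues i) * c i ^ 2 = 0 := by
    refine (Finset.sum_eq_zero_iff_of_nonneg fun i _ => ?_).mp hsum
    exact mul_nonneg (sub_nonneg.mpr (hρ i)) (sq_nonneg _)
  have hlc : ∀ i, hA.eigenvalues i * c i = ρ * c i := by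
    intro i
    rcases mul_eq_zero.mp (hterm i (Finset.mem_univ i)) with h0 | h0
    · have : hA.eigenvalues i = ρ := by linarith [sub_eq_zero.mp h0]
      rw [this]
    · have : c i = 0 := pow_eq_zero_iff (n := 2) (by norm_num) |>.mp h0
      rw [this, mul_zero, mul_zero]
  have key : A.mulVec x = U *ᵥ (fun i => hA.eigenvalues i * c i) := by
    conv_lhs => rw [hA.spectral_theorem, Unitary.conjStarAlgAut_apply]
    rw [← mulVec_mulVec, ← hc, ← mulVec_mulVec]
    have : (diagonal (RCLike.ofReal ∘ hA.eigenvalues) : Matrix n n ℝ) *ᵥ c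
        = fun i => hA.eigenvalues i * c i := by
      ext i
      simp [mulVec_diagonal]
    rw [this]
  rw [key]
  have : (fun i => hA.eigenvalues i * c i) = ρ • c := by
    ext i; simp [hlc i]
  rw [this, mulVec_smul, hUc]

lemma eig_congr {A B : Matrix n n ℝ} (h : A = B) (hA : A.IsHermitian) (hB : B.IsHermitian) :
    hA.eigenvalues = hB.eigenvalues := by subst h; rfl

end aux

open Matrix

lemma adj_rotate {V : Type*} [Fintype V] [DecidableEq V]
    (G : SimpleGraph V) [DecidableRel G.Adj]
    (u v w : V) (huw : ¬ G.Adj u w) (hvw : G.Adj v w) (hne : u ≠ w)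
    [inst' : DecidableRel (G.deleteEdges {s(v, w)} ⊔ fromEdgeSet {s(u, w)}).Adj] :
    (G.deleteEdges {s(v, w)} ⊔ fromEdgeSet {s(u, w)}).adjMatrix ℝ
      = G.adjMatrix ℝ + Matrix.single u w 1 + Matrix.single w u 1
        - Matrix.single v w 1 - Matrix.single w v 1 := by
  have huv : u ≠ v := fun h => huw (h ▸ hvw)
  have hvw' : v ≠ w := hvw.ne
  have hwu : ¬ G.Adj w u := fun h => huw h.symm
  have hwv : G.Adj w v := hvw.symm
  ext a b
  simp only [adjMatrix_apply, Matrix.add_apply, Matrix.sub_apply, Matrix.single, of_apply,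
    sup_adj, SimpleGraph.deleteEdges_adj, fromEdgeSet_adj, Set.mem_singleton_iff, Sym2.eq_iff]
  split_ifs <;> simp_all <;> simp_all [eq_comm] <;> tauto

lemma adjSpecRad_eq {V : Type*} [Fintype V] [DecidableEq V]
    (G : SimpleGraph V) [inst : DecidableRel G.Adj] (hA : (G.adjMatrix ℝ).IsHermitian) :
    adjSpecRad G = ⨆ i, hA.eigenvalues i := by
  unfold adjSpecRad
  have hmat : (letI := Classical.decRel G.Adj; G.adjMatrix ℝ) = G.adjMatrix ℝ := by
    ext a b
    by_cases h : G.Adj a b <;> simp [h]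
  congr 1
  ext i
  exact congrFun (eig_congr hmat _ hA) i

theorem specRad_rotate_edge {V : Type*} [Fintype V] [DecidableEq V]
    (G : SimpleGraph V) [DecidableRel G.Adj] (hG : G.Connected)
    (x : V → ℝ) (hpos : ∀ i, 0 < x i) (hunit : ∑ i, x i ^ 2 = 1)
    (heig : (G.adjMatrix ℝ).mulVec x = adjSpecRad G • x)
    (u v w : V) (huw : ¬ G.Adj u w) (hvw : G.Adj v w) (hne : u ≠ w)
    (hxuv : x v ≤ x u) :
    adjSpecRad G < adjSpecRad (G.deleteEdges {s(v, w)} ⊔ fromEdgeSet {s(u, w)}) := by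
  haveI : Nonempty V := hG.nonempty
  letI instG' : DecidableRel (G.deleteEdges {s(v, w)} ⊔ fromEdgeSet {s(u, w)}).Adj :=
    Classical.decRel _
  set G' := G.deleteEdges {s(v, w)} ⊔ fromEdgeSet {s(u, w)} with hG'
  have hA : (G.adjMatrix ℝ).IsHermitian := by
    ext i j
    simp [Matrix.conjTranspose_apply, SimpleGraph.adjMatrix, G.adj_comm i j]
  have hA' : (G'.adjMatrix ℝ).IsHermitian := by
    ext i j
    simp [Matrix.conjTranspose_apply, SimpleGraph.adjMatrix, G'.adj_comm i j]
  set ρ := adjSpecRad G with hρ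
  set ρ' := adjSpecRad G' with hρ'
  have hρ'def : ρ' = ⨆ i, hA'.eigenvalues i := adjSpecRad_eq G' hA'
  have hbdd : ∀ i, hA'.eigenvalues i ≤ ρ' := by
    intro i
    rw [hρ'def]
    exact le_ciSup (Set.Finite.bddAbove (Set.finite_range _)) i
  have hxx : x ⬝ᵥ x = 1 := by
    rw [dotProduct]
    simpa [sq] using hunit
  have hRA : x ⬝ᵥ (G.adjMatrix ℝ).mulVec x = ρ := by
    rw [heig, dotProduct_smul, smul_eq_mul, hxx, mul_one]
  have hmatid := adj_rotate G u v w huw hvw hne (inst' := instG')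
  have hstd : ∀ (a b : V), x ⬝ᵥ (Matrix.single a b (1:ℝ)).mulVec x = x a * x b := by
    intro a b
    rw [single_mulVec, one_mul]
    simp [dotProduct, Function.update_apply]
  have hRA' : x ⬝ᵥ (G'.adjMatrix ℝ).mulVec x = ρ + 2 * x w * (x u - x v) := by
    rw [hmatid]
    rw [sub_mulVec, sub_mulVec, add_mulVec, add_mulVec, dotProduct_sub, dotProduct_sub,
      dotProduct_add, dotProduct_add, hRA, hstd, hstd, hstd, hstd]
    ring
  have hge : ρ ≤ x ⬝ᵥ (G'.adjMatrix ℝ).mulVec x := by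
    rw [hRA']
    nlinarith [hpos w, sub_nonneg.mpr hxuv]
  have hle : x ⬝ᵥ (G'.adjMatrix ℝ).mulVec x ≤ ρ' := by
    have := aux_rayleigh_le hA' ρ' hbdd x
    rwa [hxx, mul_one] at this
  by_contra hcon
  push_neg at hcon
  have hEq : x ⬝ᵥ (G'.adjMatrix ℝ).mulVec x = ρ' * (x ⬝ᵥ x) := by
    rw [hxx, mul_one]; linarith
  have heq2 : ρ' = ρ := le_antisymm hcon (le_trans hge hle)
  have heigx : (G'.adjMatrix ℝ).mulVec x = ρ' • x := aux_rayleigh_eq hA' ρ' hbdd x hEq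
  have huv : u ≠ v := fun h => huw (h ▸ hvw)
  have hu : ((G'.adjMatrix ℝ).mulVec x) u = ((G.adjMatrix ℝ).mulVec x) u + x w := by
    rw [hmatid]
    rw [sub_mulVec, sub_mulVec, add_mulVec, add_mulVec]
    simp only [Pi.sub_apply, Pi.add_apply, single_mulVec, one_mul,
      Function.update_apply, Pi.zero_apply]
    simp [hne, huv]
  have h1 : ρ' * x u = ρ * x u + x w := by
    have := congrFun heigx u
    simp only [Pi.smul_apply, smul_eq_mul] at this
    rw [← this, hu]
    have := congrFun heig u
    simp only [Pi.smul_apply, smul_eq_mul] at this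
    rw [this]
  rw [heq2] at h1
  have : x w = 0 := by linarith
  exact absurd this (ne_of_gt (hpos w))
end
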